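/- arXiv:1803.09991 — 4 statements merged into one kernel-verified Lean document; each statement's English description precedes it below -/
import Mathlib

section
/- Subadditivity of the activity: for all s, t ∈ FEnd(Σ*) and every n ∈ ℕ, α_{st}(n) ≤ α_s(n) + α_t(n), where st denotes the left-to-right composition of s and t. -/
open Filter Topology

namespace AutHier

variable {A : Type*}

/-- The section (state) `f|_u` of a transformation `f : Σ* → Σ*` at the word `u`. -/
def sec (f : List A → List A) (u : List A) : List A → List A :=
  fun v => (f (u ++ v)).drop u.length

/-- `f` is an endomorphism of `Σ*`: it preserves lengths and prefixes. -/
def IsEnd (f : List A → List A) : Prop :=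
  (∀ u, (f u).length = u.length) ∧ ∀ u v, f u <+: f (u ++ v)

/-- `f` is a finite-state endomorphism of `Σ*` (an element of `FEnd(Σ*)`). -/
def IsFEnd (f : List A → List A) : Prop :=
  IsEnd f ∧ {g | ∃ u, g = sec f u}.Finite

/-- The activity `α_f(n)` of a transformation `f`:
the number of words `v` of length `n` which are images of some word `u`
of length `n` whose section `f|_u` is nontrivial. -/
noncomputable def activity (f : List A → List A) (n : ℕ) : ℕ :=
  Set.ncard {v : List A | v.length = n ∧
    ∃ u : List A, u.length = n ∧ sec f u ≠ id ∧ f u = v}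

/-- The class `SP(d)` of finite-state endomorphisms of
polynomial activity of degree at most `d`. -/
def SP (A : Type*) (d : ℤ) : Set (List A → List A) :=
  {t | IsFEnd t ∧
    Tendsto (fun n : ℕ => (activity t n : ℝ) / (n : ℝ) ^ (d + 1)) atTop (𝓝 0)}

/-- The class `SE(l)` of finite-state endomorphisms of
exponential activity of growth rate at most `l`. -/
def SE (A : Type*) (l : ℝ) : Set (List A → List A) :=
  {t | IsFEnd t ∧
    limsup (fun n : ℕ => Real.log (activity t n) / (n : ℝ)) atTop ≤ l}

/-- The stateset `Q'(t)` of the pruned automaton: all sections of `t` except `id`. -/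
def Qp (t : List A → List A) : Set (List A → List A) :=
  {g | ∃ u, g = sec t u} \ {id}

/-- One-letter transition of the determinized pruned output automaton of `t`. -/
def delta (t : List A → List A) (S : Set (List A → List A)) (y : A) :
    Set (List A → List A) :=
  {s' | s' ∈ Qp t ∧ ∃ s ∈ S, ∃ x : A, s [x] = [y] ∧ sec s [x] = s'}

/-- Extended transition function `δ*` of the determinized pruned output automaton. -/
def deltaStar (t : List A → List A) (S : Set (List A → List A)) (v : List A) :
    Set (List A → List A) :=
  v.foldl (delta t) S

/-- There is a chain of `k` cycles in the determinized pruned output automaton of `t`. -/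
def ChainOfCycles (t : List A → List A) (k : ℕ) : Prop :=
  ∃ (S : Fin k → Set (List A → List A)) (c : Fin k → List A),
    (∀ i, S i ≠ ∅) ∧ (∀ i, c i ≠ []) ∧
    (∀ h : 0 < k, ∃ v, deltaStar t {t} v = S ⟨0, h⟩) ∧
    (∀ i, deltaStar t (S i) (c i) = S i) ∧
    (∀ (i : Fin k) (h : (i : ℕ) + 1 < k),
      (∃ v, deltaStar t (S i) v = S ⟨(i : ℕ) + 1, h⟩) ∧
      ¬ (∃ v, deltaStar t (S ⟨(i : ℕ) + 1, h⟩) v = S i))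

/-- The edge relation of the orbit signalizer graph `Φ`: from the vertex `v = (s,t)`,
reading the letter `x`, with label `(x; m, ℓ)` where `m, ℓ` are the minimal integers
(`ℓ ≥ 1`) with `(s t^{m+ℓ})·x = (s t^m)·x`, the edge goes to
`v' = (r|_x, (t^ℓ)|_{r·x})` where `r = s t^m`. -/
def OSStep (v : (List A → List A) × (List A → List A)) (x : A) (m ℓ : ℕ)
    (v' : (List A → List A) × (List A → List A)) : Prop :=
  1 ≤ ℓ ∧ v.2^[m + ℓ] (v.1 [x]) = v.2^[m] (v.1 [x]) ∧
  (∀ m' ℓ' : ℕ, 1 ≤ ℓ' → v.2^[m' + ℓ'] (v.1 [x]) = v.2^[m'] (v.1 [x]) → m ≤ m') ∧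
  (∀ ℓ' : ℕ, 1 ≤ ℓ' → v.2^[m + ℓ'] (v.1 [x]) = v.2^[m] (v.1 [x]) → ℓ ≤ ℓ') ∧
  v' = (sec (v.2^[m] ∘ v.1) [x], sec (v.2^[ℓ]) ((v.2^[m] ∘ v.1) [x]))

/-- A walk of length `n` in the orbit signalizer graph `Φ`. -/
structure OSPath (A : Type*) (n : ℕ) where
  vert : Fin (n + 1) → (List A → List A) × (List A → List A)
  lett : Fin n → A
  idx : Fin n → ℕ
  per : Fin n → ℕ
  step : ∀ k : Fin n, OSStep (vert k.castSucc) (lett k) (idx k) (per k) (vert k.succ)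

/-- The inf-index-cost `i⁻(π)` of a walk with indices `idx` and periods `per`. -/
def iminusCost {n : ℕ} (idx per : Fin n → ℕ) : ℕ :=
  ∑ k : Fin n, if idx k = 0 then 0
    else (idx k - 1) * (∏ j ∈ Finset.univ.filter (· < k), per j) + 1

/-- The sup-index-cost `i⁺(π)` of a walk with indices `idx` and periods `per`. -/
def iplusCost {n : ℕ} (idx per : Fin n → ℕ) : ℕ :=
  ∑ k : Fin n, (∏ j ∈ Finset.univ.filter (· < k), per j) * idx k

/-- The period-cost `p(π)` of a walk with periods `per`. -/
def pCost {n : ℕ} (per : Fin n → ℕ) : ℕ :=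
  ∏ k : Fin n, per k

/-- The walk `w` starts at the vertex `(id, t)`, i.e. it is a walk in `Φ(t)` from its root. -/
def IsWalkFrom {n : ℕ} (t : List A → List A) (w : OSPath A n) : Prop :=
  w.vert 0 = (id, t)

/-- The vertex `v` is accessible from `(id, t)` in `Φ`, i.e. `v` is a vertex of `Φ(t)`. -/
def OSReach (t : List A → List A) (v : (List A → List A) × (List A → List A)) : Prop :=
  ∃ n : ℕ, ∃ w : OSPath A n, IsWalkFrom t w ∧ w.vert (Fin.last n) = v

/-- The set of inf-index-costs of walks in `Φ(t)` from `(id, t)`. -/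
def IminusCosts (t : List A → List A) : Set ℕ :=
  {c | ∃ n : ℕ, ∃ w : OSPath A n, IsWalkFrom t w ∧ c = iminusCost w.idx w.per}

/-- The set of sup-index-costs of walks in `Φ(t)` from `(id, t)`. -/
def IplusCosts (t : List A → List A) : Set ℕ :=
  {c | ∃ n : ℕ, ∃ w : OSPath A n, IsWalkFrom t w ∧ c = iplusCost w.idx w.per}

/-- The set of period-costs of walks in `Φ(t)` from `(id, t)`. -/
def PCosts (t : List A → List A) : Set ℕ :=
  {c | ∃ n : ℕ, ∃ w : OSPath A n, IsWalkFrom t w ∧ c = pCost w.per}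

/-- `w` is a simple cycle of `Φ(t)`: a closed walk of positive length, lying in `Φ(t)`,
with no repeated vertices. -/
def IsSimpleCycle {n : ℕ} (t : List A → List A) (w : OSPath A n) : Prop :=
  1 ≤ n ∧ OSReach t (w.vert 0) ∧ w.vert (Fin.last n) = w.vert 0 ∧
  ∀ j k : Fin (n + 1), (j : ℕ) < n → (k : ℕ) < n → w.vert j = w.vert k → j = k

/-- Subadditivity of the activity: for finite-state endomorphisms `s, t` and every `n`,
`α_{st}(n) ≤ α_s(n) + α_t(n)`, where `st` is the left-to-right composition `u ↦ t (s u)`. -/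
theorem activity_comp_le {A : Type*} [Fintype A] (s t : List A → List A)
    (hs : IsFEnd s) (ht : IsFEnd t) (n : ℕ) :
    activity (fun u => t (s u)) n ≤ activity s n + activity t n := by
  classical
  have hfin : ∀ f : List A → List A, {v : List A | v.length = n ∧
      ∃ u : List A, u.length = n ∧ sec f u ≠ id ∧ f u = v}.Finite := fun f =>
    (List.finite_length_eq (α := A) (n := n)).subset (fun v hv => hv.1)
  set st := fun u => t (s u) with hst
  set As := {v : List A | v.length = n ∧ ∃ u : List A, u.length = n ∧ sec s u ≠ id ∧ s u = v}
    with hAs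
  set At := {v : List A | v.length = n ∧ ∃ u : List A, u.length = n ∧ sec t u ≠ id ∧ t u = v}
    with hAt
  have key : {v : List A | v.length = n ∧ ∃ u : List A, u.length = n ∧ sec st u ≠ id ∧ st u = v}
      ⊆ (t '' As) ∪ At := by
    rintro v ⟨hv, u, hu, hne, heq⟩
    by_cases hsu : sec s u = id
    · right
      refine ⟨hv, s u, by rw [hs.1.1 u, hu], ?_, heq⟩
      intro hid
      apply hne
      funext w
      have h1 : s (u ++ w) = s u ++ w := by
        obtain ⟨z, hz⟩ := hs.1.2 u w
        have hzw : z = w := by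
          have h := congrFun hsu w
          simp only [sec, id] at h
          rw [← hz, List.drop_left' (hs.1.1 u)] at h
          exact h
        rw [← hz, hzw]
      have h2 := congrFun hid w
      simp only [sec, id] at h2 ⊢
      show List.drop u.length (t (s (u ++ w))) = w
      rw [h1]
      rw [hs.1.1 u] at h2
      exact h2
    · left
      exact ⟨s u, ⟨hs.1.1 u ▸ hu, u, hu, hsu, rfl⟩, heq⟩
  calc activity st n ≤ ((t '' As) ∪ At).ncard := by
        apply Set.ncard_le_ncard key (((hfin s).image t).union (hfin t))
    _ ≤ (t '' As).ncard + At.ncard := Set.ncard_union_le _ _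
    _ ≤ As.ncard + At.ncard := by
        exact Nat.add_le_add_right (Set.ncard_image_le (hfin s)) _


end AutHier
end

section
/- For every t ∈ FEnd(Σ*) with t ≠ id and every n ∈ ℕ, α_t(n) = #{v ∈ Σⁿ : δ*({t}, v) ≠ ∅}; that is, the activity of t equals the number of length-n paths starting from the state {t} in the determinized pruned output automaton of t. -/
open Filter Topology

namespace AutHier

variable {A : Type*}

lemma sec_nil' (f : List A → List A) : sec f [] = f := by
  funext v; simp [sec]

lemma sec_sec' (f : List A → List A) (u w : List A) :
    sec (sec f u) w = sec f (u ++ w) := by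
  funext v
  simp [sec, List.drop_drop, List.append_assoc, Nat.add_comm]

lemma sec_id' (u : List A) : sec (id : List A → List A) u = id := by
  funext v; simp [sec]

lemma apply_append' {f : List A → List A} (hf : IsEnd f) (u w : List A) :
    f (u ++ w) = f u ++ sec f u w := by
  obtain ⟨r, hr⟩ := hf.2 u w
  have : sec f u w = r := by
    simp [sec, ← hr, ← hf.1 u]
  rw [this, hr]

lemma sec_apply_length {f : List A → List A} (hf : IsEnd f) (u w : List A) :
    (sec f u w).length = w.length := by
  have := hf.1 (u ++ w)
  have h2 := congrArg List.length (apply_append' hf u w)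
  simp [hf.1] at h2 ⊢
  omega

lemma deltaStar_eq (t : List A → List A) (ht : IsEnd t) (htid : t ≠ id)
    (v : List A) :
    deltaStar t {t} v =
      {g | ∃ u : List A, u.length = v.length ∧ sec t u ≠ id ∧ t u = v ∧
        g = sec t u} := by
  induction v using List.reverseRecOn with
  | nil =>
    have ht0 : t [] = [] := List.length_eq_zero_iff.mp (ht.1 [])
    ext g
    simp only [deltaStar, List.foldl_nil, Set.mem_singleton_iff, Set.mem_setOf_eq,
      List.length_nil, List.length_eq_zero_iff]
    constructor
    · intro hg
      exact ⟨[], rfl, by rw [sec_nil']; exact htid, ht0, by rw [hg, sec_nil']⟩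
    · rintro ⟨u, rfl, -, -, rfl⟩
      exact (sec_nil' t)
  | append_singleton v y ih =>
    have hstep : deltaStar t {t} (v ++ [y]) = delta t (deltaStar t {t} v) y := by
      simp [deltaStar, List.foldl_append]
    rw [hstep, ih]
    ext g
    simp only [delta, Set.mem_setOf_eq]
    constructor
    · rintro ⟨⟨⟨u', hgu'⟩, hgid⟩, s, ⟨u, hu, hsid, htu, rfl⟩, x, hsx, rfl⟩
      refine ⟨u ++ [x], by simp [hu], ?_, ?_, sec_sec' t u [x]⟩
      · rw [← sec_sec' t u [x]]
        simpa using hgid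
      · rw [apply_append' ht u [x], htu, hsx]
    · rintro ⟨u', hu', hgid, htu', rfl⟩
      have hne : u' ≠ [] := by
        intro h; subst h; simp at hu'
      obtain ⟨u, x, rfl⟩ := (List.eq_nil_or_concat u').resolve_left hne
      simp only [List.concat_eq_append] at hu' hgid htu' ⊢
      have hu : u.length = v.length := by
        simpa using hu'
      have hsplit : t u ++ sec t u [x] = v ++ [y] := by
        rw [← apply_append' ht u [x], htu']
      have hlen : (t u).length = v.length := by rw [ht.1 u, hu]
      obtain ⟨h1, h2⟩ := List.append_inj hsplit (by rw [hlen])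
      have hsecne : sec t u ≠ id := by
        intro h
        apply hgid
        rw [← sec_sec' t u [x], h, sec_id']
      refine ⟨⟨⟨u ++ [x], rfl⟩, hgid⟩, sec t u, ⟨u, hu, hsecne, h1, rfl⟩, x, h2,
        sec_sec' t u [x]⟩

/-- The activity of `t ≠ id` equals the number of length-`n` paths from the state `{t}`
in the determinized pruned output automaton of `t`:
`α_t(n) = #{v ∈ Σⁿ : δ*({t}, v) ≠ ∅}`. -/
theorem activity_eq_card_paths {A : Type*} [Fintype A] (t : List A → List A)
    (ht : IsFEnd t) (htid : t ≠ id) (n : ℕ) :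
    activity t n =
      Set.ncard {v : List A | v.length = n ∧ deltaStar t {t} v ≠ ∅} := by
  unfold activity
  congr 1
  ext v
  simp only [Set.mem_setOf_eq, and_congr_right_iff]
  intro hv
  rw [deltaStar_eq t ht.1 htid v, ← Set.nonempty_iff_ne_empty]
  constructor
  · rintro ⟨u, hu, hsec, htu⟩
    exact ⟨sec t u, u, by rw [hu, hv], hsec, htu, rfl⟩
  · rintro ⟨g, u, hu, hsec, htu, rfl⟩
    exact ⟨u, by rw [hu, hv], hsec, htu⟩

end AutHier
end

section
/- Let t ∈ FEnd(Σ*) and suppose the orbit signalizer graph Φ(t) has finitely many vertices. Then the monogenic semigroup {t^n : n ≥ 1} is infinite if and only if Φ(t) contains a simple cycle κ (a closed walk with no repeated vertices) with i⁻(κ) > 0 or p(κ) > 1. -/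
open Filter Topology

namespace AutHier

variable {A : Type*}

section Basic
variable {t : List A → List A}

theorem IsEnd.iter (h : IsEnd t) (k : ℕ) : IsEnd (t^[k]) := by
  induction k with
  | zero => exact ⟨fun u => rfl, fun u v => ⟨v, rfl⟩⟩
  | succ k ih =>
    constructor
    · intro u; rw [Function.iterate_succ_apply, ih.1, h.1]
    · intro u v
      rw [Function.iterate_succ_apply, Function.iterate_succ_apply]
      obtain ⟨w, hw⟩ := h.2 u v
      rw [← hw]
      exact ih.2 (t u) w

theorem IsEnd.iter_len (h : IsEnd t) (k : ℕ) (u : List A) : (t^[k] u).length = u.length :=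
  (h.iter k).1 u

theorem IsEnd.iter_take (h : IsEnd t) (k : ℕ) (u v : List A) :
    (t^[k] (u ++ v)).take u.length = t^[k] u := by
  obtain ⟨w, hw⟩ := (h.iter k).2 u v
  rw [← hw, List.take_append_of_le_length (le_of_eq (h.iter_len k u).symm),
    List.take_of_length_le (le_of_eq (h.iter_len k u))]

theorem IsEnd.iter_split (h : IsEnd t) (k : ℕ) (u v : List A) :
    t^[k] (u ++ v) = t^[k] u ++ (t^[k] (u ++ v)).drop u.length := by
  conv_lhs => rw [← List.take_append_drop u.length (t^[k] (u ++ v))]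
  rw [h.iter_take]

end Basic

section Orbit
variable {α : Type*} {g : α → α} {p : α}

theorem orbit_per {a c : ℕ} (h : g^[a + c] p = g^[a] p) (d k : ℕ) :
    g^[a + d + k * c] p = g^[a + d] p := by
  induction k with
  | zero => simp
  | succ k ih =>
    have : a + d + (k + 1) * c = (d + k * c) + (a + c) := by ring
    rw [this, Function.iterate_add_apply, h, ← Function.iterate_add_apply]
    have : d + k * c + a = a + d + k * c := by ring
    rw [this, ih]

theorem orbit_per' {a c N C : ℕ} (h : g^[a + c] p = g^[a] p) (hN : a ≤ N) (hC : c ∣ C) :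
    g^[N + C] p = g^[N] p := by
  obtain ⟨d, rfl⟩ := Nat.exists_eq_add_of_le hN
  obtain ⟨k, rfl⟩ := hC
  rw [mul_comm]
  exact orbit_per h d k

theorem orbit_min_dvd {m ℓ : ℕ} (h1 : 1 ≤ ℓ) (h2 : g^[m + ℓ] p = g^[m] p)
    (hmin : ∀ ℓ', 1 ≤ ℓ' → g^[m + ℓ'] p = g^[m] p → ℓ ≤ ℓ')
    {m'' ℓ'' : ℕ} (hm : m ≤ m'') (h3 : 1 ≤ ℓ'') (h4 : g^[m'' + ℓ''] p = g^[m''] p) :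
    ℓ ∣ ℓ'' := by
  have hq : Function.IsPeriodicPt g ℓ (g^[m] p) := by
    unfold Function.IsPeriodicPt Function.IsFixedPt
    rw [← Function.iterate_add_apply, Nat.add_comm ℓ m, h2]
  have hℓ : ℓ = Function.minimalPeriod g (g^[m] p) := by
    refine le_antisymm ?_ (hq.minimalPeriod_le h1)
    refine hmin _ (Function.IsPeriodicPt.minimalPeriod_pos h1 hq) ?_
    have := Function.isPeriodicPt_minimalPeriod g (g^[m] p)
    unfold Function.IsPeriodicPt Function.IsFixedPt at this
    rw [Nat.add_comm, Function.iterate_add_apply, this]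
  have hmem : g^[m] p ∈ Function.periodicPts g :=
    Function.mk_mem_periodicPts h1 hq
  have hq'' : Function.IsPeriodicPt g ℓ'' (g^[m''] p) := by
    unfold Function.IsPeriodicPt Function.IsFixedPt
    rw [← Function.iterate_add_apply, Nat.add_comm ℓ'' m'', h4]
  have key : Function.minimalPeriod g (g^[m''] p) = Function.minimalPeriod g (g^[m] p) := by
    obtain ⟨d, rfl⟩ := Nat.exists_eq_add_of_le hm
    rw [Nat.add_comm m d, Function.iterate_add_apply]
    exact Function.minimalPeriod_apply_iterate hmem d
  have := hq''.minimalPeriod_dvd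
  rw [key, ← hℓ] at this
  exact this

end Orbit
section GoodSec
variable {t : List A → List A}

/-- The key invariant: a vertex of `Φ(t)` reached by a walk of cost `(I, P)`
reading word `u` has this explicit description. -/
def Good (t : List A → List A) (v : (List A → List A) × (List A → List A))
    (u : List A) (I P : ℕ) : Prop :=
  v.1 = sec (t^[I]) u ∧ v.2 = sec (t^[P]) (t^[I] u) ∧ t^[I + P] u = t^[I] u ∧ 1 ≤ P

theorem good_base (ht : IsEnd t) : Good t (id, t) ([] : List A) 0 1 := by
  refine ⟨?_, ?_, ?_, le_refl 1⟩
  · funext v; simp [sec]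
  · funext v; simp [sec]
  · have : t [] = ([] : List A) := List.length_eq_zero_iff.mp (ht.1 [])
    simp [this]

theorem Good.perI (hg : Good t v u I P) {C : ℕ} (hC : P ∣ C) :
    t^[I + C] u = t^[I] u := by
  have := hg.2.2.1
  exact orbit_per' this le_rfl hC

theorem Good.tauRep (ht : IsEnd t) (hg : Good t v u I P) (j : ℕ) (w : List A) :
    v.2^[j] w = (t^[P * j] (t^[I] u ++ w)).drop u.length := by
  induction j generalizing w with
  | zero =>
    simp only [Function.iterate_zero, id_eq, Nat.mul_zero]
    rw [← ht.iter_len I u]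
    simp
  | succ j ih =>
    rw [Function.iterate_succ_apply', ih, hg.2.1]
    simp only [sec, ht.iter_len]
    have h1 : t^[P * j] (t^[I] u) = t^[I] u := by
      rw [← Function.iterate_add_apply, Nat.add_comm]
      exact hg.perI ⟨j, rfl⟩
    have h2 : t^[I] u ++ (t^[P * j] (t^[I] u ++ w)).drop u.length
        = t^[P * j] (t^[I] u ++ w) := by
      conv_rhs => rw [ht.iter_split (u := t^[I] u) (v := w)]
      rw [h1, ht.iter_len]
    rw [h2, ← Function.iterate_add_apply]
    have : P + P * j = P * (j + 1) := by ring
    rw [this]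

theorem Good.rep (ht : IsEnd t) (hg : Good t v u I P) (j : ℕ) (w : List A) :
    v.2^[j] (v.1 w) = (t^[I + P * j] (u ++ w)).drop u.length := by
  rw [hg.tauRep ht, hg.1]
  simp only [sec]
  rw [← ht.iter_split, ← Function.iterate_add_apply, Nat.add_comm (P * j) I]

end GoodSec
section StepSec
variable {t : List A → List A} {v v' : (List A → List A) × (List A → List A)}
  {u : List A} {I P : ℕ}

theorem Good.stepInv (ht : IsEnd t) (hg : Good t v u I P) {x : A} {m ℓ : ℕ}
    (hs : OSStep v x m ℓ v') : Good t v' (u ++ [x]) (I + P * m) (P * ℓ) := by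
  obtain ⟨hl1, heq, -, -, hv'⟩ := hs
  have hP := hg.2.2.2
  have len1 : (u ++ [x]).length = u.length + 1 := by simp
  have key : t^[I] u ++ v.2^[m] (v.1 [x]) = t^[I + P * m] (u ++ [x]) := by
    rw [hg.rep ht m [x]]
    have := (ht.iter_split (I + P * m) u [x]).symm
    rw [hg.perI ⟨m, rfl⟩] at this
    exact this
  refine ⟨?_, ?_, ?_, Nat.mul_pos hP hl1⟩
  · rw [hv']
    funext z
    show (((v.2^[m] ∘ v.1) ([x] ++ z))).drop ([x] : List A).length
        = (t^[I + P * m] ((u ++ [x]) ++ z)).drop (u ++ [x]).length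
    simp only [Function.comp_apply, List.length_singleton, len1]
    rw [hg.rep ht m ([x] ++ z), List.drop_drop, ← List.append_assoc]
  · rw [hv']
    funext z
    show ((v.2^[ℓ]) (((v.2^[m] ∘ v.1) [x]) ++ z)).drop ((v.2^[m] ∘ v.1) [x]).length
        = (t^[P * ℓ] (t^[I + P * m] (u ++ [x]) ++ z)).drop (t^[I + P * m] (u ++ [x])).length
    simp only [Function.comp_apply]
    have hξ : (v.2^[m] (v.1 [x])).length = 1 := by
      rw [hg.rep ht m [x], List.length_drop, ht.iter_len, len1]
      omega
    rw [hξ, hg.tauRep ht ℓ (v.2^[m] (v.1 [x]) ++ z), List.drop_drop, ← List.append_assoc, key,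
      ht.iter_len, len1]
  · have e1 : ∀ k : ℕ, t^[I + P * k] (u ++ [x]) = t^[I] u ++ v.2^[k] (v.1 [x]) := by
      intro k
      rw [hg.rep ht k [x]]
      conv_lhs => rw [ht.iter_split (I + P * k) u [x]]
      rw [hg.perI ⟨k, rfl⟩]
    have harith : I + P * m + P * ℓ = I + P * (m + ℓ) := by ring
    rw [harith, e1 (m + ℓ), e1 m, heq]

theorem good_edge_exists [Fintype A] (ht : IsEnd t) (hg : Good t v u I P) (x : A) :
    ∃ m ℓ v', OSStep v x m ℓ v' := by
  classical
  -- orbit of u ++ [x] under t is eventually periodic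
  obtain ⟨a, c, hc, hac⟩ : ∃ a c, 1 ≤ c ∧ t^[a + c] (u ++ [x]) = t^[a] (u ++ [x]) := by
    haveI : Finite {l : List A // l.length = (u ++ [x]).length} :=
      inferInstanceAs (Finite (List.Vector A (u ++ [x]).length))
    obtain ⟨i, j, hij, hgij⟩ := Finite.exists_ne_map_eq_of_infinite
      (fun k => (⟨t^[k] (u ++ [x]), ht.iter_len k _⟩ : {l : List A // l.length = (u ++ [x]).length}))
    rcases Nat.lt_or_ge i j with h | h
    · exact ⟨i, j - i, by omega, by
        have : i + (j - i) = j := by omega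
        rw [this]; exact (congrArg Subtype.val hgij).symm⟩
    · have hji : j < i := by omega
      exact ⟨j, i - j, by omega, by
        have : j + (i - j) = i := by omega
        rw [this]; exact congrArg Subtype.val hgij⟩
  set f : ℕ → List A := fun k => v.2^[k] (v.1 [x]) with hf
  have frep : ∀ k, f k = (t^[I + P * k] (u ++ [x])).drop u.length := fun k => hg.rep ht k [x]
  have hPpos := hg.2.2.2
  have hsat : ∃ m₀, ∃ ℓ', 1 ≤ ℓ' ∧ f (m₀ + ℓ') = f m₀ := by
    refine ⟨a, c, hc, ?_⟩
    rw [frep, frep]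
    congr 1
    have : I + P * (a + c) = (I + P * a) + P * c := by ring
    rw [this]
    exact orbit_per' hac (by nlinarith) ⟨P, by ring⟩
  set m := sInf {m₀ | ∃ ℓ', 1 ≤ ℓ' ∧ f (m₀ + ℓ') = f m₀} with hm
  have hmem : m ∈ {m₀ | ∃ ℓ', 1 ≤ ℓ' ∧ f (m₀ + ℓ') = f m₀} := Nat.sInf_mem hsat
  obtain ⟨ℓ₀, hℓ₀, hfℓ₀⟩ := hmem
  set ℓ := sInf {ℓ' | 1 ≤ ℓ' ∧ f (m + ℓ') = f m} with hℓ
  have hmemℓ : ℓ ∈ {ℓ' | 1 ≤ ℓ' ∧ f (m + ℓ') = f m} := Nat.sInf_mem ⟨ℓ₀, hℓ₀, hfℓ₀⟩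
  refine ⟨m, ℓ, _, hmemℓ.1, hmemℓ.2, ?_, ?_, rfl⟩
  · intro m' ℓ' h1 h2
    exact Nat.sInf_le ⟨ℓ', h1, h2⟩
  · intro ℓ' h1 h2
    exact Nat.sInf_le ⟨h1, h2⟩

end StepSec
section WalkSec
variable {t : List A → List A}
  {v₀ w₀ : (List A → List A) × (List A → List A)}
  {vf vg : ℕ → (List A → List A) × (List A → List A)}
  {lf lg : ℕ → A} {mf pf mg pg : ℕ → ℕ} {n n' k : ℕ}

/-- A walk in `Φ`, indexed by `ℕ` for convenience. -/
def NWalk (v₀ : (List A → List A) × (List A → List A))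
    (vf : ℕ → (List A → List A) × (List A → List A)) (lf : ℕ → A) (mf pf : ℕ → ℕ)
    (n : ℕ) : Prop :=
  vf 0 = v₀ ∧ ∀ k, k < n → OSStep (vf k) (lf k) (mf k) (pf k) (vf (k + 1))

def PPc (pf : ℕ → ℕ) (k : ℕ) : ℕ := ∏ j ∈ Finset.range k, pf j
def IpN (mf pf : ℕ → ℕ) (n : ℕ) : ℕ := ∑ k ∈ Finset.range n, PPc pf k * mf k
def Cnt0 (mf : ℕ → ℕ) (n : ℕ) : ℕ := ∑ k ∈ Finset.range n, (if mf k = 0 then 0 else 1)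
def readW (lf : ℕ → A) (n : ℕ) : List A := (List.range n).map lf

theorem PPc_succ (pf : ℕ → ℕ) (n : ℕ) : PPc pf (n + 1) = PPc pf n * pf n :=
  Finset.prod_range_succ pf n

theorem IpN_succ (mf pf : ℕ → ℕ) (n : ℕ) :
    IpN mf pf (n + 1) = IpN mf pf n + PPc pf n * mf n :=
  Finset.sum_range_succ _ n

theorem Cnt0_succ (mf : ℕ → ℕ) (n : ℕ) :
    Cnt0 mf (n + 1) = Cnt0 mf n + (if mf n = 0 then 0 else 1) :=
  Finset.sum_range_succ _ n

theorem readW_succ (lf : ℕ → A) (n : ℕ) : readW lf (n + 1) = readW lf n ++ [lf n] := by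
  simp [readW, List.range_succ]

theorem readW_len (lf : ℕ → A) (n : ℕ) : (readW lf n).length = n := by simp [readW]

theorem NWalk.trunc (h : NWalk v₀ vf lf mf pf n) (hk : k ≤ n) : NWalk v₀ vf lf mf pf k :=
  ⟨h.1, fun j hj => h.2 j (lt_of_lt_of_le hj hk)⟩

theorem NWalk.per_pos (h : NWalk v₀ vf lf mf pf n) (hk : k < n) : 1 ≤ pf k :=
  (h.2 k hk).1

theorem NWalk.PPc_pos (h : NWalk v₀ vf lf mf pf n) (hk : k ≤ n) : 1 ≤ PPc pf k := by
  refine Nat.one_le_iff_ne_zero.mpr (Finset.prod_ne_zero_iff.mpr ?_)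
  intro j hj
  exact Nat.one_le_iff_ne_zero.mp (h.per_pos (lt_of_lt_of_le (Finset.mem_range.mp hj) hk))

theorem goodOfNWalk (ht : IsEnd t) (h : NWalk (id, t) vf lf mf pf n) :
    Good t (vf n) (readW lf n) (IpN mf pf n) (PPc pf n) := by
  induction n with
  | zero =>
    have e1 : readW lf 0 = [] := rfl
    have e2 : IpN mf pf 0 = 0 := rfl
    have e3 : PPc pf 0 = 1 := rfl
    rw [e1, e2, e3, h.1]
    exact good_base ht
  | succ n ih =>
    have hg := ih (h.trunc (Nat.le_succ n))
    have hs := h.2 n (Nat.lt_succ_self n)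
    rw [readW_succ, IpN_succ, PPc_succ]
    exact hg.stepInv ht hs

def spl {β : Type*} (f g : ℕ → β) (n : ℕ) : ℕ → β := fun k => if k < n then f k else g (k - n)

theorem spl_lt {β : Type*} {f g : ℕ → β} (h : k < n) : spl f g n k = f k := if_pos h

theorem spl_ge {β : Type*} {f g : ℕ → β} (h : n ≤ k) : spl f g n k = g (k - n) :=
  if_neg (by omega)

theorem spl_add {β : Type*} (f g : ℕ → β) (n j : ℕ) : spl f g n (n + j) = g j := by
  rw [spl_ge (by omega)]
  congr 1
  omega

theorem NWalk.concat (h1 : NWalk v₀ vf lf mf pf n) (h2 : NWalk (vf n) vg lg mg pg n') :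
    NWalk v₀ (spl vf vg n) (spl lf lg n) (spl mf mg n) (spl pf pg n) (n + n') := by
  have hv : ∀ k, k ≤ n → spl vf vg n k = vf k := by
    intro k hk
    rcases Nat.lt_or_ge k n with h | h
    · exact spl_lt h
    · have hkn : k = n := by omega
      subst hkn
      rw [spl_ge le_rfl, Nat.sub_self, h2.1]
  constructor
  · rw [hv 0 (Nat.zero_le n), h1.1]
  · intro k hk
    rcases Nat.lt_or_ge k n with h | h
    · rw [hv k h.le, hv (k + 1) h, spl_lt h, spl_lt h, spl_lt h]
      exact h1.2 k h
    · obtain ⟨j, rfl⟩ : ∃ j, k = n + j := ⟨k - n, by omega⟩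
      have e2 : n + j + 1 = n + (j + 1) := by omega
      rw [spl_add, e2, spl_add, spl_add, spl_add, spl_add]
      exact h2.2 j (by omega)

theorem PPc_concat (pf pg : ℕ → ℕ) (n n' : ℕ) :
    PPc (spl pf pg n) (n + n') = PPc pf n * PPc pg n' := by
  unfold PPc
  rw [Finset.prod_range_add]
  congr 1
  · exact Finset.prod_congr rfl fun j hj => spl_lt (Finset.mem_range.mp hj)
  · exact Finset.prod_congr rfl fun j _ => spl_add pf pg n j

theorem Cnt0_concat (mf mg : ℕ → ℕ) (n n' : ℕ) :
    Cnt0 (spl mf mg n) (n + n') = Cnt0 mf n + Cnt0 mg n' := by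
  unfold Cnt0
  rw [Finset.sum_range_add]
  congr 1
  · exact Finset.sum_congr rfl fun j hj => by rw [spl_lt (Finset.mem_range.mp hj)]
  · exact Finset.sum_congr rfl fun j _ => by rw [spl_add mf mg n j]

theorem Cnt0_le_IpN (h : NWalk v₀ vf lf mf pf n) : Cnt0 mf n ≤ IpN mf pf n := by
  refine Finset.sum_le_sum fun k hk => ?_
  rcases Nat.eq_zero_or_pos (mf k) with h0 | h0
  · simp [h0]
  · have : mf k ≠ 0 := by omega
    simp only [this, if_false]
    have := h.PPc_pos (le_of_lt (Finset.mem_range.mp hk))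
    nlinarith

/-- Reachability via `ℕ`-indexed walks. -/
def NReach (v w : (List A → List A) × (List A → List A)) : Prop :=
  ∃ n vf lf mf pf, NWalk v vf lf mf pf n ∧ vf n = w

theorem NReach.refl [Nonempty A] (v : (List A → List A) × (List A → List A)) : NReach v v :=
  ⟨0, fun _ => v, fun _ => Classical.arbitrary A, fun _ => 0, fun _ => 0,
    ⟨rfl, fun k hk => absurd hk (Nat.not_lt_zero k)⟩, rfl⟩

theorem NReach.trans (h1 : NReach v₀ w₀) (h2 : NReach w₀ u₀) : NReach v₀ u₀ := by
  obtain ⟨n1, vf, lf, mf, pf, hw1, he1⟩ := h1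
  obtain ⟨n2, vg, lg, mg, pg, hw2, he2⟩ := h2
  rw [← he1] at hw2
  exact ⟨n1 + n2, _, _, _, _, hw1.concat hw2, by rw [spl_add, he2]⟩

theorem NWalk.reach_end (h : NWalk v₀ vf lf mf pf n) : NReach v₀ (vf n) :=
  ⟨n, vf, lf, mf, pf, h, rfl⟩

theorem NWalk.reach_mid (h : NWalk v₀ vf lf mf pf n) (hk : k ≤ n) : NReach v₀ (vf k) :=
  (h.trunc hk).reach_end

end WalkSec
section ConvSec
variable {t : List A → List A} {n : ℕ}
  {v₀ : (List A → List A) × (List A → List A)}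
  {vf : ℕ → (List A → List A) × (List A → List A)}
  {lf : ℕ → A} {mf pf : ℕ → ℕ}

def vfO {n : ℕ} (w : OSPath A n) : ℕ → (List A → List A) × (List A → List A) :=
  fun k => if h : k ≤ n then w.vert ⟨k, by omega⟩ else w.vert (Fin.last n)

noncomputable def lfO [Nonempty A] {n : ℕ} (w : OSPath A n) : ℕ → A :=
  fun k => if h : k < n then w.lett ⟨k, h⟩ else Classical.arbitrary A

def mfO {n : ℕ} (w : OSPath A n) : ℕ → ℕ :=
  fun k => if h : k < n then w.idx ⟨k, h⟩ else 0

def pfO {n : ℕ} (w : OSPath A n) : ℕ → ℕ :=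
  fun k => if h : k < n then w.per ⟨k, h⟩ else 1

theorem vfO_eq {n : ℕ} (w : OSPath A n) (k : ℕ) (hk : k ≤ n) :
    vfO w k = w.vert ⟨k, by omega⟩ := dif_pos hk

theorem lfO_eq [Nonempty A] {n : ℕ} (w : OSPath A n) (k : ℕ) (hk : k < n) :
    lfO w k = w.lett ⟨k, hk⟩ := dif_pos hk

theorem mfO_eq {n : ℕ} (w : OSPath A n) (k : ℕ) (hk : k < n) :
    mfO w k = w.idx ⟨k, hk⟩ := dif_pos hk

theorem pfO_eq {n : ℕ} (w : OSPath A n) (k : ℕ) (hk : k < n) :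
    pfO w k = w.per ⟨k, hk⟩ := dif_pos hk

theorem osp_to_nwalk [Nonempty A] (w : OSPath A n) :
    NWalk (w.vert 0) (vfO w) (lfO w) (mfO w) (pfO w) n := by
  constructor
  · rw [vfO_eq w 0 (Nat.zero_le n)]
    rfl
  · intro k hk
    rw [vfO_eq w k (by omega), vfO_eq w (k + 1) (by omega),
      lfO_eq w k hk, mfO_eq w k hk, pfO_eq w k hk]
    exact w.step ⟨k, hk⟩

theorem nwalk_to_osp (h : NWalk v₀ vf lf mf pf n) :
    ∃ w : OSPath A n, (∀ k : Fin (n + 1), w.vert k = vf k) ∧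
      (∀ k : Fin n, w.lett k = lf k ∧ w.idx k = mf k ∧ w.per k = pf k) := by
  refine ⟨⟨fun k => vf k, fun k => lf k, fun k => mf k, fun k => pf k, fun k => ?_⟩,
    fun k => rfl, fun k => ⟨rfl, rfl, rfl⟩⟩
  simp only [Fin.coe_castSucc, Fin.val_succ]
  exact h.2 k k.isLt

theorem osreach_iff_nreach [Nonempty A] :
    OSReach t v₀ ↔ NReach (id, t) v₀ := by
  constructor
  · rintro ⟨n, w, hw, he⟩
    have h1 := osp_to_nwalk w
    rw [hw] at h1
    refine ⟨n, _, _, _, _, h1, ?_⟩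
    rw [vfO_eq w n le_rfl]
    exact he
  · rintro ⟨n, vf, lf, mf, pf, hw, he⟩
    obtain ⟨w, hv, -⟩ := nwalk_to_osp hw
    refine ⟨n, w, ?_, ?_⟩
    · show w.vert 0 = (id, t)
      rw [hv 0]
      show vf ((0 : Fin (n + 1)) : ℕ) = (id, t)
      rw [Fin.val_zero, hw.1]
    · rw [hv (Fin.last n)]
      show vf ((Fin.last n : Fin (n + 1)) : ℕ) = v₀
      rw [Fin.val_last, he]

theorem readW_congr {lg : ℕ → A} (h : ∀ k < n, lf k = lg k) : readW lf n = readW lg n := by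
  unfold readW
  exact List.map_congr_left fun k hk => h k (List.mem_range.mp hk)

theorem word_walk [Fintype A] [Nonempty A] (ht : IsEnd t) (u : List A) :
    ∃ vf lf mf pf, NWalk (id, t) vf lf mf pf u.length ∧ readW lf u.length = u := by
  induction u using List.reverseRecOn with
  | nil =>
    exact ⟨fun _ => (id, t), fun _ => Classical.arbitrary A, fun _ => 0, fun _ => 0,
      ⟨rfl, fun k hk => absurd hk (by simp)⟩, rfl⟩
  | append_singleton u x ih =>
    obtain ⟨vf, lf, mf, pf, hw, hr⟩ := ih
    have hg := goodOfNWalk ht hw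
    rw [hr] at hg
    obtain ⟨m, ℓ, v', hs⟩ := good_edge_exists ht hg x
    rw [show (u ++ [x]).length = u.length + 1 from by simp]
    refine ⟨fun k => if k ≤ u.length then vf k else v',
      fun k => if k < u.length then lf k else x,
      fun k => if k < u.length then mf k else m,
      fun k => if k < u.length then pf k else ℓ, ⟨by simp [hw.1], ?_⟩, ?_⟩
    · intro k hk
      rcases Nat.lt_or_ge k u.length with h | h
      · simp only [if_pos h, if_pos (show k ≤ u.length by omega),
          if_pos (show k + 1 ≤ u.length by omega)]
        exact hw.2 k h
      · have hk' : k = u.length := by omega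
        subst hk'
        simp only [if_pos (le_refl u.length), if_neg (lt_irrefl u.length),
          if_neg (show ¬ (u.length + 1 ≤ u.length) by omega)]
        exact hs
    · rw [readW_succ, if_neg (lt_irrefl u.length),
        readW_congr (fun k hk => (if_pos hk : _ = lf k)), hr]
end ConvSec
section CycleSec
variable {t : List A → List A}
  {v₀ : (List A → List A) × (List A → List A)}
  {vf : ℕ → (List A → List A) × (List A → List A)}
  {lf : ℕ → A} {mf pf : ℕ → ℕ}

theorem closed_bad_to_simple [Nonempty A]
    (hnb : ¬ ∃ (n : ℕ) (w : OSPath A n), IsSimpleCycle t w ∧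
      (0 < iminusCost w.idx w.per ∨ 1 < pCost w.per)) :
    ∀ n : ℕ, ∀ v₀ vf (lf : ℕ → A) mf pf, NWalk v₀ vf lf mf pf n →
      (∀ k ≤ n, OSReach t (vf k)) →
      vf n = v₀ → ∀ b < n, mf b = 0 ∧ pf b = 1 := by
  intro n
  induction n using Nat.strong_induction_on with
  | _ n IH =>
  intro v₀ vf lf mf pf hw hreach hcl b hb
  by_contra hbad0
  have hbad : mf b ≠ 0 ∨ pf b ≠ 1 := by tauto
  by_cases hinj : ∀ i j, i < n → j < n → vf i = vf j → i = j
  · -- the closed walk is a simple cycle: contradiction with hnb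
    obtain ⟨w, hv, hl⟩ := nwalk_to_osp hw
    refine hnb ⟨n, w, ⟨by omega, ?_, ?_, ?_⟩, ?_⟩
    · rw [hv 0]
      show OSReach t (vf ((0 : Fin (n + 1)) : ℕ))
      rw [Fin.val_zero]
      exact hreach 0 (by omega)
    · rw [hv (Fin.last n), hv 0]
      show vf ((Fin.last n : Fin (n + 1)) : ℕ) = vf ((0 : Fin (n + 1)) : ℕ)
      rw [Fin.val_last, Fin.val_zero, hcl, hw.1]
    · intro j k hj hk hjk
      rw [hv j, hv k] at hjk
      exact Fin.ext (hinj _ _ hj hk hjk)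
    · rcases hbad with h | h
      · left
        refine Finset.sum_pos' (fun k _ => Nat.zero_le _) ⟨⟨b, hb⟩, Finset.mem_univ _, ?_⟩
        rw [(hl ⟨b, hb⟩).2.1, if_neg h]
        exact Nat.succ_pos _
      · right
        unfold pCost
        have h1 : w.per ⟨b, hb⟩ ≤ ∏ k : Fin n, w.per k :=
          Finset.single_le_prod' (fun j _ => by
            rw [(hl j).2.2]; exact (hw.2 j j.isLt).1) (Finset.mem_univ _)
        have h2 : 1 < w.per ⟨b, hb⟩ := by
          have h4 : w.per ⟨b, hb⟩ = pf b := (hl ⟨b, hb⟩).2.2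
          have := (hw.2 b hb).1
          omega
        omega
  · push_neg at hinj
    obtain ⟨i, j, hi, hj, hvij, hij⟩ := hinj
    obtain ⟨i, j, hij, hj, hvij⟩ : ∃ i j, i < j ∧ j < n ∧ vf i = vf j := by
      rcases lt_or_gt_of_ne hij with h | h
      exacts [⟨i, j, h, hj, hvij⟩, ⟨j, i, h, hi, hvij.symm⟩]
    rcases Nat.lt_or_ge b j with hbj | hbj
    · rcases Nat.lt_or_ge b i with hbi | hbi
      · -- b < i : outer walk case
        have hw2 : NWalk (vf i) (fun k => vf (j + k)) (fun k => lf (j + k))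
            (fun k => mf (j + k)) (fun k => pf (j + k)) (n - j) :=
          ⟨by simpa using hvij.symm, fun k hk => hw.2 (j + k) (by omega)⟩
        have hcat := (hw.trunc (show i ≤ n by omega)).concat hw2
        have hres := IH (i + (n - j)) (by omega) v₀ _ _ _ _ hcat
          (fun k hk => by
            rcases Nat.lt_or_ge k i with h | h
            · rw [spl_lt h]; exact hreach k (by omega)
            · rw [spl_ge h]; exact hreach (j + (k - i)) (by omega))
          (by rw [spl_ge (show i ≤ i + (n - j) by omega)]
              have : i + (n - j) - i = n - j := by omega
              rw [this]
              have : j + (n - j) = n := by omega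
              rw [this, hcl])
          b (by omega)
        rw [spl_lt hbi, spl_lt hbi] at hres
        exact hbad0 hres
      · -- i ≤ b < j : inner walk case
        have hw2 : NWalk (vf i) (fun k => vf (i + k)) (fun k => lf (i + k))
            (fun k => mf (i + k)) (fun k => pf (i + k)) (j - i) :=
          ⟨by simp, fun k hk => hw.2 (i + k) (by omega)⟩
        have hres := IH (j - i) (by omega) (vf i) _ _ _ _ hw2
          (fun k hk => hreach (i + k) (by omega))
          (by show vf (i + (j - i)) = vf i
              rw [show i + (j - i) = j by omega]
              exact hvij.symm)
          (b - i) (by omega)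
        rw [show i + (b - i) = b by omega] at hres
        exact hbad0 hres
    · -- j ≤ b : outer walk case
      have hw2 : NWalk (vf i) (fun k => vf (j + k)) (fun k => lf (j + k))
          (fun k => mf (j + k)) (fun k => pf (j + k)) (n - j) :=
        ⟨by simpa using hvij.symm, fun k hk => hw.2 (j + k) (by omega)⟩
      have hcat := (hw.trunc (show i ≤ n by omega)).concat hw2
      have hres := IH (i + (n - j)) (by omega) v₀ _ _ _ _ hcat
        (fun k hk => by
          rcases Nat.lt_or_ge k i with h | h
          · rw [spl_lt h]; exact hreach k (by omega)
          · rw [spl_ge h]; exact hreach (j + (k - i)) (by omega))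
        (by rw [spl_ge (show i ≤ i + (n - j) by omega)]
            have : i + (n - j) - i = n - j := by omega
            rw [this]
            have : j + (n - j) = n := by omega
            rw [this, hcl])
        (i + (b - j)) (by omega)
      rw [spl_add, spl_add] at hres
      rw [show j + (b - j) = b by omega] at hres
      exact hbad0 hres
end CycleSec
section BoundSec
variable {t : List A → List A}
  {v v' : (List A → List A) × (List A → List A)}
  {x : A} {m ℓ : ℕ}

noncomputable def mB (v : (List A → List A) × (List A → List A)) (x : A) : ℕ :=
  sInf {m | ∃ ℓ v', OSStep v x m ℓ v'}

noncomputable def lB (v : (List A → List A) × (List A → List A)) (x : A) : ℕ :=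
  sInf {ℓ | ∃ m v', OSStep v x m ℓ v'}

theorem OSStep.mB_eq (hs : OSStep v x m ℓ v') : m = mB v x := by
  have h1 : m ∈ {m | ∃ ℓ v', OSStep v x m ℓ v'} := ⟨ℓ, v', hs⟩
  obtain ⟨ℓ₂, v₂, hs₂⟩ := Nat.sInf_mem (⟨m, h1⟩ : Set.Nonempty _)
  exact le_antisymm (hs.2.2.1 _ ℓ₂ hs₂.1 hs₂.2.1) (Nat.sInf_le h1)

theorem OSStep.lB_eq (hs : OSStep v x m ℓ v') : ℓ = lB v x := by
  have h1 : ℓ ∈ {ℓ | ∃ m v', OSStep v x m ℓ v'} := ⟨m, v', hs⟩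
  obtain ⟨m₂, v₂, hs₂⟩ := Nat.sInf_mem (⟨ℓ, h1⟩ : Set.Nonempty _)
  have hm : m₂ = m :=
    le_antisymm (hs₂.2.2.1 m ℓ hs.1 hs.2.1) (hs.2.2.1 m₂ (sInf _) hs₂.1 hs₂.2.1)
  rw [hm] at hs₂
  exact le_antisymm (hs.2.2.2.1 _ hs₂.1 hs₂.2.1) (Nat.sInf_le h1)

theorem bound_all_walks [Fintype A] [Nonempty A]
    (hfin : {v | OSReach t v}.Finite)
    (hnb : ¬ ∃ (n : ℕ) (w : OSPath A n), IsSimpleCycle t w ∧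
      (0 < iminusCost w.idx w.per ∨ 1 < pCost w.per)) :
    ∃ B1 B2 : ℕ, 1 ≤ B2 ∧ ∀ n vf (lf : ℕ → A) mf pf, NWalk (id, t) vf lf mf pf n →
      IpN mf pf n ≤ B1 ∧ PPc pf n ≤ B2 := by
  classical
  set R := hfin.toFinset with hR
  set K := R.card with hK
  set lam := max (R.sup fun v => Finset.univ.sup fun x : A => lB v x) 1 with hlam
  set mu := R.sup fun v => Finset.univ.sup fun x : A => mB v x with hmu
  have hlam1 : 1 ≤ lam := le_max_right _ 1
  refine ⟨K * (lam ^ K * mu), lam ^ K, Nat.one_le_pow _ _ (by omega), ?_⟩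
  intro n vf lf mf pf hw
  have main : ∀ n, NWalk (id, t) vf lf mf pf n →
      ∃ S : Finset ((List A → List A) × (List A → List A)), S ⊆ R ∧
        (∀ s ∈ S, ¬ NReach (vf n) s) ∧
        PPc pf n ≤ lam ^ S.card ∧ IpN mf pf n ≤ S.card * (lam ^ K * mu) := by
    intro n
    induction n with
    | zero =>
      intro _
      refine ⟨∅, Finset.empty_subset _, by simp, ?_, ?_⟩
      · have : PPc pf 0 = 1 := rfl
        simp [this]
      · have : IpN mf pf 0 = 0 := rfl
        simp [this]
    | succ n ihn =>
      intro hw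
      obtain ⟨S, hSR, hnr, hP, hI⟩ := ihn (hw.trunc (Nat.le_succ n))
      have hsn := hw.2 n (Nat.lt_succ_self n)
      have hreach : ∀ k ≤ n + 1, OSReach t (vf k) := fun k hk =>
        osreach_iff_nreach.mpr (hw.reach_mid hk)
      have hstep1 : NReach (vf n) (vf (n + 1)) :=
        ⟨1, fun k => vf (n + k), fun k => lf (n + k), fun k => mf (n + k),
          fun k => pf (n + k),
          ⟨rfl, fun k hk => by
            have hk0 : k = 0 := by omega
            subst hk0
            exact hw.2 n (Nat.lt_succ_self n)⟩, rfl⟩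
      by_cases hgood : mf n = 0 ∧ pf n = 1
      · refine ⟨S, hSR, ?_, ?_, ?_⟩
        · exact fun s hs' hre => hnr s hs' (NReach.trans hstep1 hre)
        · rw [PPc_succ, hgood.2, Nat.mul_one]; exact hP
        · rw [IpN_succ, hgood.1, Nat.mul_zero, Nat.add_zero]; exact hI
      · have hvnR : vf n ∈ R := by
          rw [hR, Set.Finite.mem_toFinset]
          exact hreach n (by omega)
        have hnotin : vf n ∉ S := fun hin => hnr _ hin (NReach.refl _)
        have hpfn : pf n ≤ lam := by
          rw [hsn.lB_eq]
          exact le_trans (le_trans (Finset.le_sup (Finset.mem_univ (lf n)))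
            (Finset.le_sup (f := fun v => Finset.univ.sup fun x : A => lB v x) hvnR))
            (le_max_left _ 1)
        have hmfn : mf n ≤ mu := by
          rw [hsn.mB_eq]
          exact le_trans (Finset.le_sup (Finset.mem_univ (lf n)))
            (Finset.le_sup (f := fun v => Finset.univ.sup fun x : A => mB v x) hvnR)
        refine ⟨insert (vf n) S, Finset.insert_subset hvnR hSR, ?_, ?_, ?_⟩
        · intro s hsin hre
          rcases Finset.mem_insert.mp hsin with rfl | hsin'
          · -- a closed bad walk: contradiction
            obtain ⟨n₂, vg, lg, mg, pg, hw2, he2⟩ := hre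
            have hw1 : NWalk (vf n) (fun k => vf (n + k)) (fun k => lf (n + k))
                (fun k => mf (n + k)) (fun k => pf (n + k)) 1 :=
              ⟨rfl, fun k hk => by
                have hk0 : k = 0 := by omega
                subst hk0
                exact hw.2 n (Nat.lt_succ_self n)⟩
            have hw2x : NWalk ((fun k => vf (n + k)) 1) vg lg mg pg n₂ := hw2
            have hwc := hw1.concat hw2x
            have hres := closed_bad_to_simple hnb (1 + n₂) (vf n) _ _ _ _ hwc
              (fun k hk => by
                rcases Nat.lt_or_ge k 1 with h | h
                · have hk0 : k = 0 := by omega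
                  subst hk0
                  rw [spl_lt h]
                  exact hreach n (by omega)
                · rw [spl_ge h]
                  exact osreach_iff_nreach.mpr
                    (NReach.trans (hw.reach_mid (le_refl (n + 1))) (hw2.reach_mid (by omega))))
              (by rw [spl_ge (show (1 : ℕ) ≤ 1 + n₂ by omega)]
                  have e : 1 + n₂ - 1 = n₂ := by omega
                  rw [e, he2])
              0 (by omega)
            rw [spl_lt (by omega : (0:ℕ) < 1), spl_lt (by omega : (0:ℕ) < 1)] at hres
            exact hgood hres
          · exact hnr _ hsin' (NReach.trans hstep1 hre)
        · rw [PPc_succ, Finset.card_insert_of_notMem hnotin, pow_succ]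
          exact Nat.mul_le_mul hP hpfn
        · rw [IpN_succ, Finset.card_insert_of_notMem hnotin]
          have h1 : PPc pf n ≤ lam ^ K :=
            le_trans hP (Nat.pow_le_pow_right (by omega) (Finset.card_le_card hSR))
          have h2 : PPc pf n * mf n ≤ lam ^ K * mu := Nat.mul_le_mul h1 hmfn
          have h3 : S.card * (lam ^ K * mu) + PPc pf n * mf n ≤
              (S.card + 1) * (lam ^ K * mu) := by nlinarith
          omega
  obtain ⟨S, hSR, -, h1, h2⟩ := main n hw
  have hcard : S.card ≤ K := Finset.card_le_card hSR
  constructor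
  · exact le_trans h2 (Nat.mul_le_mul_right _ hcard)
  · exact le_trans h1 (Nat.pow_le_pow_right (by omega) hcard)
end BoundSec
section FinishSec
variable {t : List A → List A}

theorem finite_powers_of_key {B1 B2 : ℕ}
    (hkey : ∀ u : List A, t^[B1 + B2.factorial] u = t^[B1] u) :
    {f : List A → List A | ∃ n, 1 ≤ n ∧ f = t^[n]}.Finite := by
  have hfact : 1 ≤ B2.factorial := Nat.one_le_iff_ne_zero.mpr (Nat.factorial_ne_zero B2)
  have hE : t^[B1 + B2.factorial] = t^[B1] := funext hkey
  have hstep : ∀ n, B1 ≤ n → t^[n + B2.factorial] = t^[n] := by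
    intro n hn
    have e1 : n + B2.factorial = (n - B1) + (B1 + B2.factorial) := by omega
    rw [e1, Function.iterate_add, hE, ← Function.iterate_add, Nat.sub_add_cancel hn]
  have hred : ∀ n, 1 ≤ n → ∃ m, 1 ≤ m ∧ m ≤ B1 + B2.factorial ∧ t^[n] = t^[m] := by
    intro n
    induction n using Nat.strong_induction_on with
    | _ n IH =>
    intro hn
    rcases le_or_gt n (B1 + B2.factorial) with h | h
    · exact ⟨n, hn, h, rfl⟩
    · have h1 : t^[n] = t^[n - B2.factorial] := by
        have e1 : n = (n - B2.factorial) + B2.factorial := by omega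
        conv_lhs => rw [e1]
        exact hstep (n - B2.factorial) (by omega)
      have hlt : n - B2.factorial < n := by omega
      have h1le : 1 ≤ n - B2.factorial := by omega
      obtain ⟨m, hm1, hm2, hm3⟩ := IH (n - B2.factorial) hlt h1le
      exact ⟨m, hm1, hm2, h1.trans hm3⟩
  refine Set.Finite.subset (Set.Finite.image (fun m => t^[m]) (Set.finite_Icc 1 (B1 + B2.factorial))) ?_
  rintro f ⟨n, hn, rfl⟩
  obtain ⟨m, hm1, hm2, hm3⟩ := hred n hn
  exact ⟨m, ⟨hm1, hm2⟩, hm3.symm⟩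

theorem finite_of_nobad [Fintype A] [Nonempty A] (ht : IsEnd t)
    (hfin : {v | OSReach t v}.Finite)
    (hnb : ¬ ∃ (n : ℕ) (w : OSPath A n), IsSimpleCycle t w ∧
      (0 < iminusCost w.idx w.per ∨ 1 < pCost w.per)) :
    {f : List A → List A | ∃ n, 1 ≤ n ∧ f = t^[n]}.Finite := by
  obtain ⟨B1, B2, hB2, hbd⟩ := bound_all_walks hfin hnb
  refine finite_powers_of_key (B1 := B1) (B2 := B2) ?_
  intro u
  obtain ⟨vf, lf, mf, pf, hw, hr⟩ := word_walk ht u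
  have hg := goodOfNWalk ht hw
  rw [hr] at hg
  obtain ⟨hbd1, hbd2⟩ := hbd _ _ _ _ _ hw
  exact orbit_per' hg.2.2.1 hbd1 (Nat.dvd_factorial hg.2.2.2 hbd2)

theorem step_bound (ht : IsEnd t) {a c : ℕ} (hc : 1 ≤ c) (hac : t^[a + c] = t^[a])
    {v v' : (List A → List A) × (List A → List A)} {u : List A} {I P : ℕ} {x : A} {m ℓ : ℕ}
    (hg : Good t v u I P) (hs : OSStep v x m ℓ v') :
    (a ≤ I → m = 0) ∧ (I < a → m ≤ a - I) ∧ (P ∣ c.factorial → P * ℓ ∣ c.factorial) := by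
  have hP1 := hg.2.2.2
  have hptw : ∀ (w : List A), t^[a + c] w = t^[a] w := fun w => congrFun hac w
  have frep : ∀ k, v.2^[k] (v.1 [x]) = (t^[I + P * k] (u ++ [x])).drop u.length :=
    fun k => hg.rep ht k [x]
  refine ⟨?_, ?_, ?_⟩
  · intro haI
    have h0 : v.2^[0 + c] (v.1 [x]) = v.2^[0] (v.1 [x]) := by
      rw [frep, frep]
      congr 1
      have e1 : I + P * (0 + c) = (I + P * 0) + P * c := by ring
      rw [e1]
      exact orbit_per' (hptw (u ++ [x])) (by omega) ⟨P, by ring⟩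
    have := hs.2.2.1 0 c hc h0
    omega
  · intro hIa
    have h0 : v.2^[(a - I) + c] (v.1 [x]) = v.2^[a - I] (v.1 [x]) := by
      rw [frep, frep]
      congr 1
      have e1 : I + P * ((a - I) + c) = (I + P * (a - I)) + P * c := by ring
      rw [e1]
      refine orbit_per' (hptw (u ++ [x])) ?_ ⟨P, by ring⟩
      have : a - I ≤ P * (a - I) := Nat.le_mul_of_pos_left _ hP1
      omega
    exact hs.2.2.1 (a - I) c hc h0
  · intro hPd
    set w' := u ++ [x] with hw'
    have hsat : a ∈ {mm | ∃ ll, 1 ≤ ll ∧ t^[mm + ll] w' = t^[mm] w'} := ⟨c, hc, hptw w'⟩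
    set pre := sInf {mm | ∃ ll, 1 ≤ ll ∧ t^[mm + ll] w' = t^[mm] w'} with hpre
    have hpre_le : pre ≤ a := Nat.sInf_le hsat
    obtain ⟨ll, hll1, hlle⟩ := Nat.sInf_mem (⟨a, hsat⟩ : Set.Nonempty _)
    have hper_pt : Function.IsPeriodicPt t ll (t^[pre] w') := by
      unfold Function.IsPeriodicPt Function.IsFixedPt
      rw [← Function.iterate_add_apply, Nat.add_comm ll pre, hlle]
    have hmem : t^[pre] w' ∈ Function.periodicPts t := Function.mk_mem_periodicPts hll1 hper_pt
    set L := Function.minimalPeriod t (t^[pre] w') with hL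
    have hLpos : 0 < L := Function.minimalPeriod_pos_of_mem_periodicPts hmem
    have hLper : t^[pre + L] w' = t^[pre] w' := by
      have := Function.isPeriodicPt_minimalPeriod t (t^[pre] w')
      unfold Function.IsPeriodicPt Function.IsFixedPt at this
      rw [Nat.add_comm, Function.iterate_add_apply, this]
    have hLc : L ∣ c := by
      have hq : Function.minimalPeriod t (t^[a] w') = L := by
        have e1 : a = (a - pre) + pre := by omega
        rw [e1, Function.iterate_add_apply]
        exact Function.minimalPeriod_apply_iterate hmem (a - pre)
      have hcper : Function.IsPeriodicPt t c (t^[a] w') := by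
        unfold Function.IsPeriodicPt Function.IsFixedPt
        rw [← Function.iterate_add_apply, Nat.add_comm c a, hptw w']
      have := hcper.minimalPeriod_dvd
      rwa [hq] at this
    set g := Nat.gcd P L with hgcd
    have hgpos : 0 < g := Nat.gcd_pos_of_pos_left L hP1
    have hgL : g ∣ L := Nat.gcd_dvd_right P L
    have hgP : g ∣ P := Nat.gcd_dvd_left P L
    have hℓ''pos : 0 < L / g := Nat.div_pos (Nat.le_of_dvd hLpos hgL) hgpos
    have hPL : L ∣ P * (L / g) := by
      obtain ⟨P', hP'⟩ := hgP
      refine ⟨P', ?_⟩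
      rw [hP']
      calc g * P' * (L / g) = g * (L / g) * P' := by ring
      _ = L * P' := by rw [Nat.mul_div_cancel' hgL]
    have h4 : v.2^[(m + pre) + (L / g)] (v.1 [x]) = v.2^[m + pre] (v.1 [x]) := by
      rw [frep, frep]
      congr 1
      have e1 : I + P * ((m + pre) + (L / g)) = (I + P * (m + pre)) + P * (L / g) := by ring
      rw [e1]
      refine orbit_per' hLper ?_ hPL
      have : pre ≤ P * (m + pre) := by
        calc pre ≤ m + pre := by omega
        _ ≤ P * (m + pre) := Nat.le_mul_of_pos_left _ hP1
      omega
    have hdvd : ℓ ∣ L / g :=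
      orbit_min_dvd hs.1 hs.2.1 hs.2.2.2.1 (Nat.le_add_right m pre) hℓ''pos h4
    have hlcm : P * (L / g) = Nat.lcm P L := by
      rw [Nat.lcm]
      exact (Nat.mul_div_assoc P hgL).symm
    have hlcmd : Nat.lcm P L ∣ c.factorial :=
      Nat.lcm_dvd hPd (dvd_trans hLc (Nat.dvd_factorial hc le_rfl))
    exact dvd_trans (Nat.mul_dvd_mul_left P hdvd) (hlcm ▸ hlcmd)

theorem walk_bound [Fintype A] (ht : IsEnd t) {a c : ℕ} (hc : 1 ≤ c)
    (hac : t^[a + c] = t^[a])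
    {vf : ℕ → (List A → List A) × (List A → List A)} {lf : ℕ → A} {mf pf : ℕ → ℕ} {n : ℕ}
    (hw : NWalk (id, t) vf lf mf pf n) :
    IpN mf pf n ≤ a + c.factorial * a ∧ PPc pf n ∣ c.factorial := by
  induction n with
  | zero =>
    refine ⟨?_, ?_⟩
    · have : IpN mf pf 0 = 0 := rfl
      omega
    · have : PPc pf 0 = 1 := rfl
      rw [this]
      exact one_dvd _
  | succ n ih =>
    obtain ⟨ih1, ih2⟩ := ih (hw.trunc (Nat.le_succ n))
    have hg := goodOfNWalk ht (hw.trunc (Nat.le_succ n))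
    have hs := hw.2 n (Nat.lt_succ_self n)
    obtain ⟨sb1, sb2, sb3⟩ := step_bound ht hc hac hg hs
    have hfact : 1 ≤ c.factorial := Nat.one_le_iff_ne_zero.mpr (Nat.factorial_ne_zero c)
    constructor
    · rw [IpN_succ]
      rcases le_or_gt a (IpN mf pf n) with h | h
      · rw [sb1 h, Nat.mul_zero, Nat.add_zero]
        exact ih1
      · have hm := sb2 h
        have hPle : PPc pf n ≤ c.factorial := Nat.le_of_dvd (by omega) ih2
        have : PPc pf n * mf n ≤ c.factorial * (a - IpN mf pf n) :=
          Nat.mul_le_mul hPle hm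
        have h2 : c.factorial * (a - IpN mf pf n) ≤ c.factorial * a :=
          Nat.mul_le_mul_left _ (by omega)
        omega
    · rw [PPc_succ]
      exact sb3 ih2

theorem cycle_pump {v1 : (List A → List A) × (List A → List A)}
    {vf : ℕ → (List A → List A) × (List A → List A)} {lf : ℕ → A} {mf pf : ℕ → ℕ} {q : ℕ}
    (hcw : NWalk v1 vf lf mf pf q) (hcl : vf q = v1) (k : ℕ) :
    ∃ vg lg mg pg, NWalk v1 vg lg mg pg (q * k) ∧ vg (q * k) = v1 ∧
      Cnt0 mg (q * k) = k * Cnt0 mf q ∧ PPc pg (q * k) = (PPc pf q) ^ k := by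
  induction k with
  | zero =>
    refine ⟨fun _ => v1, lf, mf, pf, ⟨rfl, fun j hj => absurd hj (by omega)⟩, rfl, ?_, ?_⟩
    · have : Cnt0 mf 0 = 0 := rfl
      simp [Nat.mul_zero]
      rfl
    · simp [Nat.mul_zero]
      rfl
  | succ k ih =>
    obtain ⟨vg, lg, mg, pg, hwk, hclk, hcnt, hpp⟩ := ih
    have hcw' : NWalk (vg (q * k)) vf lf mf pf q := by rw [hclk]; exact hcw
    have hcat := hwk.concat hcw'
    have e1 : q * (k + 1) = q * k + q := by ring
    refine ⟨_, _, _, _, by rw [e1]; exact hcat, ?_, ?_, ?_⟩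
    · rw [e1, spl_add, hcl]
    · rw [e1, Cnt0_concat, hcnt]
      ring
    · rw [e1, PPc_concat, hpp]
      ring
end FinishSec
section MainSec
variable {t : List A → List A}

theorem collision (hf : {f : List A → List A | ∃ n, 1 ≤ n ∧ f = t^[n]}.Finite) :
    ∃ a c, 1 ≤ c ∧ t^[a + c] = t^[a] := by
  haveI := hf.to_subtype
  obtain ⟨i, j, hij, he⟩ := Finite.exists_ne_map_eq_of_infinite
    (fun k : ℕ => (⟨t^[k + 1], k + 1, by omega, rfl⟩ :
      {f : List A → List A | ∃ n, 1 ≤ n ∧ f = t^[n]}))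
  have he' : t^[i + 1] = t^[j + 1] := congrArg Subtype.val he
  rcases lt_or_gt_of_ne hij with h | h
  · refine ⟨i + 1, j - i, by omega, ?_⟩
    rw [show i + 1 + (j - i) = j + 1 by omega]
    exact he'.symm
  · refine ⟨j + 1, i - j, by omega, ?_⟩
    rw [show j + 1 + (i - j) = i + 1 by omega]
    exact he'

theorem infinite_of_bad [Fintype A] {n : ℕ} {w : OSPath A n} (ht : IsEnd t)
    (hsc : IsSimpleCycle t w)
    (hbad : 0 < iminusCost w.idx w.per ∨ 1 < pCost w.per) :
    {f : List A → List A | ∃ n, 1 ≤ n ∧ f = t^[n]}.Infinite := by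
  obtain ⟨hn1, hreach0, hclosed, -⟩ := hsc
  haveI : Nonempty A := ⟨w.lett ⟨0, hn1⟩⟩
  intro hni
  obtain ⟨a, c, hc, hac⟩ := collision hni
  have hfact : 1 ≤ c.factorial := Nat.one_le_iff_ne_zero.mpr (Nat.factorial_ne_zero c)
  have hcw := osp_to_nwalk w
  have hclO : vfO w n = w.vert 0 := by
    rw [vfO_eq w n le_rfl]
    exact hclosed
  obtain ⟨n₀, va, la, ma, pa, hwa, hea⟩ := osreach_iff_nreach.mp hreach0
  rcases hbad with hb | hb
  · obtain ⟨k0, hk0⟩ : ∃ k0 : Fin n, w.idx k0 ≠ 0 := by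
      by_contra hall
      push_neg at hall
      have h0 : iminusCost w.idx w.per = 0 :=
        Finset.sum_eq_zero fun k _ => by rw [hall k]; simp
      omega
    have hcnt : 1 ≤ Cnt0 (mfO w) n := by
      have he1 : mfO w (k0 : ℕ) = w.idx k0 := mfO_eq w _ k0.isLt
      have hterm : (if mfO w (k0 : ℕ) = 0 then (0:ℕ) else 1) = 1 := by
        rw [if_neg]
        rw [he1]
        exact hk0
      have hsum : (if mfO w (k0 : ℕ) = 0 then (0:ℕ) else 1) ≤
          ∑ x ∈ Finset.range n, (if mfO w x = 0 then (0:ℕ) else 1) :=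
        Finset.single_le_sum (f := fun x => if mfO w x = 0 then (0:ℕ) else 1)
          (fun i _ => Nat.zero_le _) (Finset.mem_range.mpr k0.isLt)
      unfold Cnt0
      omega
    set k := a + c.factorial * a + 1 with hk
    obtain ⟨vg, lg, mg, pg, hwk, hclk, hcnt0, -⟩ := cycle_pump hcw hclO k
    have hwk' : NWalk (va n₀) vg lg mg pg (n * k) := by rw [hea]; exact hwk
    have hfull := hwa.concat hwk'
    have hbd := walk_bound ht hc hac hfull
    have hcle := Cnt0_le_IpN hfull
    rw [Cnt0_concat] at hcle
    have s1 : k ≤ Cnt0 mg (n * k) := by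
      rw [hcnt0]
      exact Nat.le_mul_of_pos_right _ (by omega)
    have s2 : Cnt0 mg (n * k) ≤ IpN (spl ma mg n₀) (spl pa pg n₀) (n₀ + n * k) :=
      le_trans (Nat.le_add_left _ _) hcle
    have hfinal : k ≤ a + c.factorial * a := le_trans (le_trans s1 s2) hbd.1
    rw [hk] at hfinal
    exact Nat.not_succ_le_self _ hfinal
  · obtain ⟨k0, hk0⟩ : ∃ k0 : Fin n, w.per k0 ≠ 1 := by
      by_contra hall
      push_neg at hall
      have h0 : pCost w.per = 1 := Finset.prod_eq_one fun k _ => hall k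
      omega
    have hper2 : 2 ≤ PPc (pfO w) n := by
      have h1 : pfO w (k0 : ℕ) ≤ PPc (pfO w) n :=
        Finset.single_le_prod' (fun j hj => hcw.per_pos (Finset.mem_range.mp hj))
          (Finset.mem_range.mpr k0.isLt)
      have h2 : pfO w (k0 : ℕ) = w.per k0 := pfO_eq w _ k0.isLt
      have h3 := hcw.per_pos k0.isLt
      omega
    set k := c.factorial with hk
    obtain ⟨vg, lg, mg, pg, hwk, hclk, -, hppk⟩ := cycle_pump hcw hclO k
    have hwk' : NWalk (va n₀) vg lg mg pg (n * k) := by rw [hea]; exact hwk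
    have hfull := hwa.concat hwk'
    have hbd := walk_bound ht hc hac hfull
    have hdvd := hbd.2
    rw [PPc_concat, hppk] at hdvd
    have hle := Nat.le_of_dvd (by omega) hdvd
    have h2k : 2 ^ k ≤ PPc pa n₀ * (PPc (pfO w) n) ^ k := by
      calc 2 ^ k ≤ (PPc (pfO w) n) ^ k := Nat.pow_le_pow_left hper2 k
      _ ≤ PPc pa n₀ * (PPc (pfO w) n) ^ k :=
        Nat.le_mul_of_pos_left _ (hwa.PPc_pos le_rfl)
    have hlt : c.factorial < 2 ^ c.factorial := Nat.lt_two_pow_self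
    rw [hk] at h2k
    have := le_trans h2k hle
    omega

theorem main_result [Fintype A] (t : List A → List A)
    (ht : IsFEnd t) (hfin : {v | OSReach t v}.Finite) :
    {f : List A → List A | ∃ n : ℕ, 1 ≤ n ∧ f = t^[n]}.Infinite ↔
      ∃ (n : ℕ) (w : OSPath A n), IsSimpleCycle t w ∧
        (0 < iminusCost w.idx w.per ∨ 1 < pCost w.per) := by
  rcases isEmpty_or_nonempty A with hA | hA
  · constructor
    · intro hinf
      exfalso
      apply hinf
      have hall : ∀ l : List A, l = [] := fun l => by
        cases l with
        | nil => rfl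
        | cons x _ => exact (hA.false x).elim
      refine Set.Finite.subset (Set.finite_singleton (t^[1])) ?_
      rintro f ⟨n, hn, rfl⟩
      have heq : t^[n] = t^[1] := by
        funext u
        rw [hall (t^[n] u), hall (t^[1] u)]
      exact Set.mem_singleton_iff.mpr heq
    · rintro ⟨n, w, hsc, -⟩
      exact (hA.false (w.lett ⟨0, hsc.1⟩)).elim
  · constructor
    · intro hinf
      by_contra hnb
      exact hinf (finite_of_nobad ht.1 hfin hnb)
    · rintro ⟨n, w, hsc, hbad⟩
      exact infinite_of_bad ht.1 hsc hbad
end MainSec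

/-- If the orbit signalizer graph `Φ(t)` has finitely many vertices, then the monogenic
semigroup `{t^n : n ≥ 1}` is infinite iff `Φ(t)` contains a simple cycle `κ` with
`i⁻(κ) > 0` or `p(κ) > 1`. -/
theorem infinite_order_iff_bad_cycle {A : Type*} [Fintype A] (t : List A → List A)
    (ht : IsFEnd t) (hfin : {v | OSReach t v}.Finite) :
    {f : List A → List A | ∃ n : ℕ, 1 ≤ n ∧ f = t^[n]}.Infinite ↔
      ∃ (n : ℕ) (w : OSPath A n), IsSimpleCycle t w ∧
        (0 < iminusCost w.idx w.per ∨ 1 < pCost w.per) :=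
  main_result t ht hfin

end AutHier
end

section
/- Index–period recursion along the orbit signalizer graph: let s, t ∈ FEnd(Σ*). For each x ∈ Σ, let m_x ≥ 0 and ℓ_x ≥ 1 be the minimal integers with (st^{m_x+ℓ_x})·x = (st^{m_x})·x (they exist since Σ is finite), and set r_x = st^{m_x}, s_x = r_x|_x, and t_x = (t^{ℓ_x})|_{r_x·x}. Assume that for every x ∈ Σ there exist integers i ≥ 0 and p ≥ 1 with s_x t_x^{i} = s_x t_x^{i+p}, and let (i_x, p_x) be the minimal such pair. Then there exists a minimal pair (i₀, p₀) with i₀ ≥ 0, p₀ ≥ 1 and s t^{i₀} = s t^{i₀+p₀}, and it satisfies p₀ = lcm_{x∈Σ}(ℓ_x · p_x) and max_{x∈Σ}(m_x + max(0, ℓ_x·(i_x − 1) + 1)) ≤ i₀ ≤ max_{x∈Σ}(m_x + ℓ_x · i_x). -/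
open Filter Topology

namespace AutHier

variable {A : Type*}

/-! ### auxiliary lemmas -/

lemma end_split {f : List A → List A} (hf : IsEnd f) (u v : List A) :
    f (u ++ v) = f u ++ sec f u v := by
  obtain ⟨c, hc⟩ := hf.2 u v
  have hlen : (f u).length = u.length := hf.1 u
  have : sec f u v = c := by
    simp only [sec, ← hc, ← hlen, List.drop_left]
  rw [this, hc]

lemma isEnd_comp {f g : List A → List A} (hf : IsEnd f) (hg : IsEnd g) :
    IsEnd (g ∘ f) := by
  constructor
  · intro u; simp [hg.1, hf.1]
  · intro u v
    rw [Function.comp_apply, Function.comp_apply, end_split hf]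
    exact hg.2 (f u) _

lemma isEnd_id : IsEnd (id : List A → List A) :=
  ⟨fun _ => rfl, fun u v => ⟨v, rfl⟩⟩

lemma isEnd_iterate {t : List A → List A} (ht : IsEnd t) (n : ℕ) :
    IsEnd (t^[n]) := by
  induction n with
  | zero => exact isEnd_id
  | succ n ih => rw [Function.iterate_succ']; exact isEnd_comp ih ht

lemma sec_comp {f g : List A → List A} (hf : IsEnd f) (hg : IsEnd g) (u : List A) :
    sec (g ∘ f) u = sec g (f u) ∘ sec f u := by
  funext v
  show ((g ∘ f) (u ++ v)).drop u.length = sec g (f u) (sec f u v)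
  rw [Function.comp_apply, end_split hf u v, end_split hg (f u) (sec f u v)]
  have h1 : (g (f u)).length = u.length := by rw [hg.1, hf.1]
  rw [← h1, List.drop_left]

lemma sec_iterate_zero (t : List A → List A) (u : List A) :
    sec (t^[0]) u = id := by
  funext v
  simp [sec]

lemma end_ext {f g : List A → List A} (hf : IsEnd f) (hg : IsEnd g)
    (h : ∀ x : A, f [x] = g [x] ∧ sec f [x] = sec g [x]) : f = g := by
  funext v
  cases v with
  | nil =>
    have h1 : (f []).length = 0 := hf.1 []
    have h2 : (g []).length = 0 := hg.1 []
    rw [List.length_eq_zero_iff] at h1 h2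
    rw [h1, h2]
  | cons x w =>
    have : (x :: w) = [x] ++ w := rfl
    rw [this, end_split hf, end_split hg, (h x).1, (h x).2]

lemma iterate_comp_left {X Y : Type*} (t : Y → Y) (z : X → Y) (n : ℕ) :
    (fun f => t ∘ f)^[n] z = t^[n] ∘ z := by
  induction n with
  | zero => rfl
  | succ n ih => rw [Function.iterate_succ_apply', ih, Function.iterate_succ']; rfl

lemma orbit_shift {X : Type*} (g : X → X) (z : X) {a c : ℕ}
    (h : g^[a + c] z = g^[a] z) {n : ℕ} (hn : a ≤ n) :
    g^[n + c] z = g^[n] z := by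
  obtain ⟨k, rfl⟩ := Nat.exists_eq_add_of_le hn
  have h1 : g^[k] (g^[a + c] z) = g^[k] (g^[a] z) := by rw [h]
  rw [← Function.iterate_add_apply, ← Function.iterate_add_apply] at h1
  rw [show a + k + c = k + (a + c) by omega, show a + k = k + a by omega]
  exact h1

lemma orbit_mul {X : Type*} (g : X → X) (z : X) {a c : ℕ}
    (h : g^[a + c] z = g^[a] z) (k : ℕ) {n : ℕ} (hn : a ≤ n) :
    g^[n + k * c] z = g^[n] z := by
  induction k with
  | zero => simp
  | succ k ih =>
    rw [show n + (k + 1) * c = (n + k * c) + c by ring]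
    exact (orbit_shift g z h (hn.trans (Nat.le_add_right n (k * c)))).trans ih

lemma orbit_dvd {X : Type*} (g : X → X) (z : X) {m ℓ : ℕ} (hl : 1 ≤ ℓ)
    (hper : g^[m + ℓ] z = g^[m] z)
    (hmin : ∀ ℓ', 1 ≤ ℓ' → g^[m + ℓ'] z = g^[m] z → ℓ ≤ ℓ')
    {a c : ℕ} (ha : m ≤ a) (hc : 1 ≤ c) (h : g^[a + c] z = g^[a] z) :
    ℓ ∣ c := by
  set q := c / ℓ with hq
  set r := c % ℓ with hrdef
  have hdm : ℓ * q + r = c := Nat.div_add_mod c ℓ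
  have hrl : r < ℓ := Nat.mod_lt _ hl
  have hk : a ≤ m + a * ℓ := by
    have : a * 1 ≤ a * ℓ := Nat.mul_le_mul_left a hl
    omega
  have e1 : g^[m + a * ℓ + c] z = g^[m + a * ℓ] z := orbit_shift g z h hk
  have e2 : g^[m + a * ℓ] z = g^[m] z := orbit_mul g z hper a (le_refl m)
  have e3 : g^[m + a * ℓ + c] z = g^[m + r] z := by
    have harith : m + a * ℓ + c = (m + r) + (a + q) * ℓ := by
      have h1 : (a + q) * ℓ = a * ℓ + q * ℓ := by ring
      have h2 : q * ℓ = ℓ * q := Nat.mul_comm q ℓ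
      omega
    rw [harith]
    exact orbit_mul g z hper (a + q) (Nat.le_add_right m r)
  have hmr : g^[m + r] z = g^[m] z := e3.symm.trans (e1.trans e2)
  rcases Nat.eq_zero_or_pos r with hr0 | hr1
  · exact ⟨q, by omega⟩
  · exact absurd (hmin r hr1 hmr) (by omega)


lemma iterate_mul_fixed {X : Type*} {t : X → X} {lx : ℕ} {y : X}
    (hfix : t^[lx] y = y) (q : ℕ) : t^[q * lx] y = y := by
  rw [Nat.mul_comm, Function.iterate_mul]
  exact Function.iterate_fixed hfix q

lemma sec_iterate_fixed {t : List A → List A} (ht : IsEnd t) {lx : ℕ} {y : List A}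
    (hfix : t^[lx] y = y) (q : ℕ) :
    sec (t^[q * lx]) y = (sec (t^[lx]) y)^[q] := by
  induction q with
  | zero => simpa using sec_iterate_zero t y
  | succ q ih =>
    have hsplit : t^[(q + 1) * lx] = t^[lx] ∘ t^[q * lx] := by
      rw [← Function.iterate_add, show lx + q * lx = (q + 1) * lx by ring]
    rw [hsplit, sec_comp (isEnd_iterate ht (q * lx)) (isEnd_iterate ht lx),
      iterate_mul_fixed hfix q, ih, Function.iterate_succ']

lemma letter_key {s t : List A → List A} (hs : IsEnd s) (ht : IsEnd t)
    (x : A) {mx lx : ℕ}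
    (hfix : t^[lx] ((t^[mx] ∘ s) [x]) = (t^[mx] ∘ s) [x])
    {n q r : ℕ} (hn : n = mx + q * lx + r) :
    (t^[n] ∘ s) [x] = t^[r] ((t^[mx] ∘ s) [x]) ∧
    sec (t^[n] ∘ s) [x]
      = sec (t^[r]) ((t^[mx] ∘ s) [x]) ∘
        ((sec (t^[lx]) ((t^[mx] ∘ s) [x]))^[q] ∘ sec (t^[mx] ∘ s) [x]) := by
  have hsplit : t^[n] ∘ s = t^[r] ∘ (t^[q * lx] ∘ (t^[mx] ∘ s)) := by
    rw [hn, show mx + q * lx + r = r + (q * lx + mx) by omega,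
      Function.iterate_add, Function.iterate_add]
    rfl
  have hE1 : IsEnd (t^[mx] ∘ s) := isEnd_comp hs (isEnd_iterate ht mx)
  have hE2 : IsEnd (t^[q * lx] ∘ (t^[mx] ∘ s)) := isEnd_comp hE1 (isEnd_iterate ht (q * lx))
  have hpt : (t^[q * lx] ∘ (t^[mx] ∘ s)) [x] = (t^[mx] ∘ s) [x] := by
    exact iterate_mul_fixed hfix q
  constructor
  · rw [hsplit]
    show t^[r] ((t^[q * lx] ∘ (t^[mx] ∘ s)) [x]) = _
    rw [hpt]
  · rw [hsplit, sec_comp hE2 (isEnd_iterate ht r), hpt,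
      sec_comp hE1 (isEnd_iterate ht (q * lx))]
    rw [show sec (t^[q*lx]) ((t^[mx] ∘ s) [x]) = (sec (t^[lx]) ((t^[mx] ∘ s) [x]))^[q]
      from sec_iterate_fixed ht hfix q]

lemma cancel_aux {X : Type*} {Af Bf tx sx : X → X} (hBA : ∀ w, Bf (Af w) = tx w)
    {q1 q2 : ℕ} (h : Af ∘ (tx^[q1] ∘ sx) = Af ∘ (tx^[q2] ∘ sx)) :
    tx^[q1 + 1] ∘ sx = tx^[q2 + 1] ∘ sx := by
  funext v
  have h1 : Af (tx^[q1] (sx v)) = Af (tx^[q2] (sx v)) := congrFun h v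
  have h2 : Bf (Af (tx^[q1] (sx v))) = Bf (Af (tx^[q2] (sx v))) := by rw [h1]
  rw [hBA, hBA] at h2
  show tx^[q1 + 1] (sx v) = tx^[q2 + 1] (sx v)
  rw [Function.iterate_succ_apply', Function.iterate_succ_apply']
  exact h2

lemma sec_split_fixed {t : List A → List A} (ht : IsEnd t) {lx r : ℕ} {y : List A}
    (hr : r ≤ lx) (w : List A) :
    sec (t^[lx - r]) (t^[r] y) (sec (t^[r]) y w) = sec (t^[lx]) y w := by
  have hsplit : t^[lx] = t^[lx - r] ∘ t^[r] := by
    rw [← Function.iterate_add, Nat.sub_add_cancel hr]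
  rw [hsplit, sec_comp (isEnd_iterate ht r) (isEnd_iterate ht (lx - r))]
  rfl


lemma letter_suff {s t : List A → List A} (hs : IsEnd s) (ht : IsEnd t) (x : A)
    {mx lx ix px : ℕ} (hl : 1 ≤ lx)
    (hfix : t^[lx] ((t^[mx] ∘ s) [x]) = (t^[mx] ∘ s) [x])
    (hGper : (sec (t^[lx]) ((t^[mx] ∘ s) [x]))^[ix + px] ∘ sec (t^[mx] ∘ s) [x]
           = (sec (t^[lx]) ((t^[mx] ∘ s) [x]))^[ix] ∘ sec (t^[mx] ∘ s) [x])
    {n c : ℕ} (hn : mx + lx * ix ≤ n) (hc : lx * px ∣ c) :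
    (t^[n + c] ∘ s) [x] = (t^[n] ∘ s) [x] ∧
    sec (t^[n + c] ∘ s) [x] = sec (t^[n] ∘ s) [x] := by
  obtain ⟨k, hk⟩ := hc
  set d := n - mx with hd
  have hdm : lx * (d / lx) + d % lx = d := Nat.div_add_mod d lx
  have hrl : d % lx < lx := Nat.mod_lt _ hl
  set q := d / lx with hqd
  set r := d % lx with hrd
  have hmxn : mx ≤ n := le_trans (Nat.le_add_right _ _) hn
  have hn1 : n = mx + q * lx + r := by
    have := Nat.mul_comm lx q; omega
  have hqi : ix ≤ q := by
    by_contra hq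
    push_neg at hq
    have h1 : lx * (q + 1) ≤ lx * ix := Nat.mul_le_mul_left lx hq
    have h2 : lx * (q + 1) = lx * q + lx := by ring
    omega
  have hn2 : n + c = mx + (q + px * k) * lx + r := by
    have h1 : (q + px * k) * lx = q * lx + px * k * lx := by ring
    have h2 : px * k * lx = lx * px * k := by ring
    have h3 : q * lx = lx * q := Nat.mul_comm q lx
    omega
  have hk1 := letter_key hs ht x hfix hn1
  have hk2 := letter_key hs ht x hfix hn2
  have hGq : (sec (t^[lx]) ((t^[mx] ∘ s) [x]))^[q + px * k] ∘ sec (t^[mx] ∘ s) [x]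
           = (sec (t^[lx]) ((t^[mx] ∘ s) [x]))^[q] ∘ sec (t^[mx] ∘ s) [x] := by
    have hbase : (fun f => (sec (t^[lx]) ((t^[mx] ∘ s) [x])) ∘ f)^[ix + px]
          (sec (t^[mx] ∘ s) [x])
        = (fun f => (sec (t^[lx]) ((t^[mx] ∘ s) [x])) ∘ f)^[ix] (sec (t^[mx] ∘ s) [x]) := by
      simp only [iterate_comp_left]; exact hGper
    have h5 := orbit_mul _ _ hbase k hqi
    simp only [iterate_comp_left] at h5
    rw [show q + px * k = q + k * px by ring]
    exact h5
  refine ⟨?_, ?_⟩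
  · rw [hk1.1, hk2.1]
  · rw [hk1.2, hk2.2, hGq]

lemma letter_nec {s t : List A → List A} (hs : IsEnd s) (ht : IsEnd t) (x : A)
    {mx lx ix px : ℕ} (hl : 1 ≤ lx) (hpx : 1 ≤ px)
    (hword : t^[mx + lx] (s [x]) = t^[mx] (s [x]))
    (hm_min : ∀ m' ℓ', 1 ≤ ℓ' → t^[m' + ℓ'] (s [x]) = t^[m'] (s [x]) → mx ≤ m')
    (hl_min : ∀ ℓ', 1 ≤ ℓ' → t^[mx + ℓ'] (s [x]) = t^[mx] (s [x]) → lx ≤ ℓ')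
    (hGper : (sec (t^[lx]) ((t^[mx] ∘ s) [x]))^[ix + px] ∘ sec (t^[mx] ∘ s) [x]
           = (sec (t^[lx]) ((t^[mx] ∘ s) [x]))^[ix] ∘ sec (t^[mx] ∘ s) [x])
    (hGmin_i : ∀ i' p', 1 ≤ p' →
      (sec (t^[lx]) ((t^[mx] ∘ s) [x]))^[i' + p'] ∘ sec (t^[mx] ∘ s) [x]
        = (sec (t^[lx]) ((t^[mx] ∘ s) [x]))^[i'] ∘ sec (t^[mx] ∘ s) [x] → ix ≤ i')
    (hGmin_p : ∀ p', 1 ≤ p' →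
      (sec (t^[lx]) ((t^[mx] ∘ s) [x]))^[ix + p'] ∘ sec (t^[mx] ∘ s) [x]
        = (sec (t^[lx]) ((t^[mx] ∘ s) [x]))^[ix] ∘ sec (t^[mx] ∘ s) [x] → px ≤ p')
    {i₀ p₀ : ℕ} (hp : 1 ≤ p₀) (hF : t^[i₀ + p₀] ∘ s = t^[i₀] ∘ s) :
    mx ≤ i₀ ∧ lx * px ∣ p₀ ∧ (1 ≤ ix → mx + lx * (ix - 1) + 1 ≤ i₀) := by
  have hfix : t^[lx] ((t^[mx] ∘ s) [x]) = (t^[mx] ∘ s) [x] := by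
    show t^[lx] (t^[mx] (s [x])) = t^[mx] (s [x])
    rw [← Function.iterate_add_apply, Nat.add_comm]
    exact hword
  have hwordF : t^[i₀ + p₀] (s [x]) = t^[i₀] (s [x]) := congrFun hF [x]
  have hmi : mx ≤ i₀ := hm_min i₀ p₀ hp hwordF
  have hlp : lx ∣ p₀ := orbit_dvd t (s [x]) hl hword hl_min hmi hp hwordF
  obtain ⟨c, hc⟩ := hlp
  have hc1 : 1 ≤ c := by
    rcases Nat.eq_zero_or_pos c with h0 | h1
    · subst h0; simp at hc; omega
    · exact h1
  set d := i₀ - mx with hd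
  have hdm : lx * (d / lx) + d % lx = d := Nat.div_add_mod d lx
  have hrl : d % lx < lx := Nat.mod_lt _ hl
  set q := d / lx with hqd
  set r := d % lx with hrd
  have hn1 : i₀ = mx + q * lx + r := by
    have := Nat.mul_comm lx q; omega
  have hn2 : i₀ + p₀ = mx + (q + c) * lx + r := by
    have h1 : (q + c) * lx = q * lx + c * lx := by ring
    have h2 : c * lx = lx * c := Nat.mul_comm c lx
    have h3 : q * lx = lx * q := Nat.mul_comm q lx
    omega
  have hk1 := letter_key hs ht x hfix hn1
  have hk2 := letter_key hs ht x hfix hn2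
  have hsec : sec (t^[i₀ + p₀] ∘ s) [x] = sec (t^[i₀] ∘ s) [x] := by rw [hF]
  rw [hk1.2, hk2.2] at hsec
  have hcan := cancel_aux (sec_split_fixed ht (le_of_lt hrl)) hsec
  rw [show q + c + 1 = (q + 1) + c by omega] at hcan
  have hiq : ix ≤ q + 1 := hGmin_i (q + 1) c hc1 hcan
  have hGper' : (fun f => (sec (t^[lx]) ((t^[mx] ∘ s) [x])) ∘ f)^[ix + px]
        (sec (t^[mx] ∘ s) [x])
      = (fun f => (sec (t^[lx]) ((t^[mx] ∘ s) [x])) ∘ f)^[ix] (sec (t^[mx] ∘ s) [x]) := by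
    simp only [iterate_comp_left]; exact hGper
  have hGmin_p' : ∀ p', 1 ≤ p' →
      (fun f => (sec (t^[lx]) ((t^[mx] ∘ s) [x])) ∘ f)^[ix + p'] (sec (t^[mx] ∘ s) [x])
        = (fun f => (sec (t^[lx]) ((t^[mx] ∘ s) [x])) ∘ f)^[ix] (sec (t^[mx] ∘ s) [x]) →
        px ≤ p' := by
    intro p' h1 h2
    simp only [iterate_comp_left] at h2
    exact hGmin_p p' h1 h2
  have hcan' : (fun f => (sec (t^[lx]) ((t^[mx] ∘ s) [x])) ∘ f)^[(q + 1) + c]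
        (sec (t^[mx] ∘ s) [x])
      = (fun f => (sec (t^[lx]) ((t^[mx] ∘ s) [x])) ∘ f)^[q + 1] (sec (t^[mx] ∘ s) [x]) := by
    simp only [iterate_comp_left]; exact hcan
  have hpxc : px ∣ c := orbit_dvd _ _ hpx hGper' hGmin_p' hiq hc1 hcan'
  refine ⟨hmi, ?_, ?_⟩
  · obtain ⟨k, hk⟩ := hpxc
    exact ⟨k, by rw [hc, hk]; ring⟩
  · intro hix
    rcases Nat.lt_or_ge q ix with hq | hq
    · have hqe : q + 1 = ix := by omega
      have hr1 : 1 ≤ r := by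
        by_contra hr0
        push_neg at hr0
        have hr0' : r = 0 := by omega
        rw [hr0', sec_iterate_zero] at hsec
        simp only [Function.id_comp] at hsec
        have := hGmin_i q c hc1 hsec
        omega
      have hql : q * lx = lx * (ix - 1) := by
        rw [Nat.mul_comm]; congr 1; omega
      omega
    · have h1 : lx * (ix - 1) + lx ≤ lx * q := by
        have h2 : lx * ((ix - 1) + 1) ≤ lx * q := Nat.mul_le_mul_left lx (by omega)
        have h3 : lx * ((ix - 1) + 1) = lx * (ix - 1) + lx := by ring
        omega
      have h4 : q * lx = lx * q := Nat.mul_comm q lx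
      omega


/-- Index–period recursion along the orbit signalizer graph: given `s, t ∈ FEnd(Σ*)`,
minimal data `(m_x, ℓ_x)` for each letter `x` (i.e. an edge of `Φ` out of `(s,t)`), and
minimal index–period pairs `(i_x, p_x)` at the target vertices `(s_x, t_x)`, there is a
minimal pair `(i₀, p₀)` with `s t^{i₀} = s t^{i₀+p₀}`, satisfying
`p₀ = lcm_{x} (ℓ_x · p_x)` and
`max_x (m_x + max(0, ℓ_x (i_x - 1) + 1)) ≤ i₀ ≤ max_x (m_x + ℓ_x i_x)`.
Here composition is left-to-right, so `s t^k` is the function `t^[k] ∘ s`. -/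
theorem index_period_recursion {A : Type*} [Fintype A] [Nonempty A]
    (s t : List A → List A) (hs : IsFEnd s) (ht : IsFEnd t)
    (m ℓ : A → ℕ)
    (hml : ∀ x : A, OSStep (s, t) x (m x) (ℓ x)
      (sec (t^[m x] ∘ s) [x], sec (t^[ℓ x]) ((t^[m x] ∘ s) [x])))
    (i p : A → ℕ)
    (hip : ∀ x : A,
      1 ≤ p x ∧
      (sec (t^[ℓ x]) ((t^[m x] ∘ s) [x]))^[i x + p x] ∘ (sec (t^[m x] ∘ s) [x]) =
        (sec (t^[ℓ x]) ((t^[m x] ∘ s) [x]))^[i x] ∘ (sec (t^[m x] ∘ s) [x]) ∧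
      (∀ i' p' : ℕ, 1 ≤ p' →
        (sec (t^[ℓ x]) ((t^[m x] ∘ s) [x]))^[i' + p'] ∘ (sec (t^[m x] ∘ s) [x]) =
          (sec (t^[ℓ x]) ((t^[m x] ∘ s) [x]))^[i'] ∘ (sec (t^[m x] ∘ s) [x]) →
        i x ≤ i') ∧
      (∀ p' : ℕ, 1 ≤ p' →
        (sec (t^[ℓ x]) ((t^[m x] ∘ s) [x]))^[i x + p'] ∘ (sec (t^[m x] ∘ s) [x]) =
          (sec (t^[ℓ x]) ((t^[m x] ∘ s) [x]))^[i x] ∘ (sec (t^[m x] ∘ s) [x]) →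
        p x ≤ p')) :
    ∃ i₀ p₀ : ℕ, 1 ≤ p₀ ∧ t^[i₀ + p₀] ∘ s = t^[i₀] ∘ s ∧
      (∀ i' p' : ℕ, 1 ≤ p' → t^[i' + p'] ∘ s = t^[i'] ∘ s → i₀ ≤ i') ∧
      (∀ p' : ℕ, 1 ≤ p' → t^[i₀ + p'] ∘ s = t^[i₀] ∘ s → p₀ ≤ p') ∧
      p₀ = Finset.univ.lcm (fun x : A => ℓ x * p x) ∧
      Finset.univ.sup' Finset.univ_nonempty
          (fun x : A => (m x : ℤ) + max 0 ((ℓ x : ℤ) * ((i x : ℤ) - 1) + 1)) ≤ (i₀ : ℤ) ∧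
      (i₀ : ℤ) ≤ Finset.univ.sup' Finset.univ_nonempty
          (fun x : A => (m x : ℤ) + (ℓ x : ℤ) * (i x : ℤ)) := by
  classical
  have hse : IsEnd s := hs.1
  have hte : IsEnd t := ht.1
  have hl1 : ∀ x, 1 ≤ ℓ x := fun x => (hml x).1
  have hword : ∀ x, t^[m x + ℓ x] (s [x]) = t^[m x] (s [x]) := fun x => (hml x).2.1
  have hm_min : ∀ x, ∀ m' ℓ', 1 ≤ ℓ' → t^[m' + ℓ'] (s [x]) = t^[m'] (s [x]) → m x ≤ m' :=
    fun x => (hml x).2.2.1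
  have hl_min : ∀ x, ∀ ℓ', 1 ≤ ℓ' → t^[m x + ℓ'] (s [x]) = t^[m x] (s [x]) → ℓ x ≤ ℓ' :=
    fun x => (hml x).2.2.2.1
  have hfix : ∀ x, t^[ℓ x] ((t^[m x] ∘ s) [x]) = (t^[m x] ∘ s) [x] := by
    intro x
    show t^[ℓ x] (t^[m x] (s [x])) = t^[m x] (s [x])
    rw [← Function.iterate_add_apply, Nat.add_comm]
    exact hword x
  set P := Finset.univ.lcm (fun x : A => ℓ x * p x) with hPdef
  set N := Finset.univ.sup (fun x : A => m x + ℓ x * i x) with hNdef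
  have hdvdP : ∀ x : A, ℓ x * p x ∣ P := fun x => Finset.dvd_lcm (Finset.mem_univ x)
  have hNge : ∀ x : A, m x + ℓ x * i x ≤ N := by
    intro x
    rw [hNdef]
    exact Finset.le_sup (f := fun x : A => m x + ℓ x * i x) (Finset.mem_univ x)
  have hPpos : 1 ≤ P := by
    rcases Nat.eq_zero_or_pos P with h0 | h1
    · exfalso
      rw [hPdef, Finset.lcm_eq_zero_iff] at h0
      obtain ⟨x, _, hx⟩ := h0
      have := hl1 x
      have := (hip x).1
      simp at hx
      rcases hx with h | h <;> omega
    · exact h1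
  have hEnds : ∀ n : ℕ, IsEnd (t^[n] ∘ s) := fun n => isEnd_comp hse (isEnd_iterate hte n)
  have hstepA : t^[N + P] ∘ s = t^[N] ∘ s := by
    apply end_ext (hEnds (N + P)) (hEnds N)
    intro x
    exact letter_suff hse hte x (hl1 x) (hfix x) (hip x).2.1 (hNge x) (hdvdP x)
  have hex : ∃ i', ∃ p', 1 ≤ p' ∧ t^[i' + p'] ∘ s = t^[i'] ∘ s := ⟨N, P, hPpos, hstepA⟩
  set i₀ := Nat.find hex with hi₀def
  have hspec : ∃ p', 1 ≤ p' ∧ t^[i₀ + p'] ∘ s = t^[i₀] ∘ s := Nat.find_spec hex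
  set p₀ := Nat.find hspec with hp₀def
  have hp₀ : 1 ≤ p₀ ∧ t^[i₀ + p₀] ∘ s = t^[i₀] ∘ s := Nat.find_spec hspec
  have hmin_i : ∀ i' p' : ℕ, 1 ≤ p' → t^[i' + p'] ∘ s = t^[i'] ∘ s → i₀ ≤ i' :=
    fun i' p' hp' heq => Nat.find_min' hex ⟨p', hp', heq⟩
  have hmin_p : ∀ p' : ℕ, 1 ≤ p' → t^[i₀ + p'] ∘ s = t^[i₀] ∘ s → p₀ ≤ p' :=
    fun p' hp' heq => Nat.find_min' hspec ⟨hp', heq⟩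
  have hnec := fun x : A => letter_nec hse hte x (hl1 x) (hip x).1 (hword x)
    (hm_min x) (hl_min x) (hip x).2.1 (hip x).2.2.1 (hip x).2.2.2 hp₀.1 hp₀.2
  have hi₀leN : i₀ ≤ N := hmin_i N P hPpos hstepA
  have hPdvd : P ∣ p₀ := Finset.lcm_dvd (fun x _ => (hnec x).2.1)
  have hp₀dvdP : p₀ ∣ P := by
    have hper' : (fun f => t ∘ f)^[i₀ + p₀] s = (fun f => t ∘ f)^[i₀] s := by
      simp only [iterate_comp_left]; exact hp₀.2
    have hmin' : ∀ ℓ', 1 ≤ ℓ' →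
        (fun f => t ∘ f)^[i₀ + ℓ'] s = (fun f => t ∘ f)^[i₀] s → p₀ ≤ ℓ' := by
      intro ℓ' h1 h2
      simp only [iterate_comp_left] at h2
      exact hmin_p ℓ' h1 h2
    have hA' : (fun f => t ∘ f)^[N + P] s = (fun f => t ∘ f)^[N] s := by
      simp only [iterate_comp_left]; exact hstepA
    exact orbit_dvd _ _ hp₀.1 hper' hmin' hi₀leN hPpos hA'
  have hp₀P : p₀ = P := Nat.dvd_antisymm hp₀dvdP hPdvd
  refine ⟨i₀, p₀, hp₀.1, hp₀.2, hmin_i, hmin_p, hp₀P, ?_, ?_⟩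
  · apply Finset.sup'_le
    intro x _
    rcases Nat.eq_zero_or_pos (i x) with hix | hix
    · have hmax : max (0 : ℤ) ((ℓ x : ℤ) * ((i x : ℤ) - 1) + 1) = 0 := by
        apply max_eq_left
        have h1 : (1 : ℤ) ≤ (ℓ x : ℤ) := by exact_mod_cast hl1 x
        rw [hix]
        push_cast
        nlinarith
      rw [hmax]
      have := (hnec x).1
      have h2 : (m x : ℤ) ≤ (i₀ : ℤ) := by exact_mod_cast this
      omega
    · have hmax : max (0 : ℤ) ((ℓ x : ℤ) * ((i x : ℤ) - 1) + 1)
          = (ℓ x : ℤ) * ((i x : ℤ) - 1) + 1 := by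
        apply max_eq_right
        have h1 : (0 : ℤ) ≤ (ℓ x : ℤ) := by positivity
        have h2 : (0 : ℤ) ≤ (i x : ℤ) - 1 := by
          have : (1 : ℤ) ≤ (i x : ℤ) := by exact_mod_cast hix
          omega
        nlinarith
      rw [hmax]
      have h3 : m x + ℓ x * (i x - 1) + 1 ≤ i₀ := (hnec x).2.2 hix
      have h4 : ((m x : ℤ)) + (ℓ x : ℤ) * ((i x : ℤ) - 1) + 1 ≤ (i₀ : ℤ) := by
        have h5 : ((i x : ℕ) - 1 : ℕ) = ((i x : ℤ) - 1 : ℤ) := by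
          have : (1 : ℕ) ≤ i x := hix
          push_cast [Nat.cast_sub this]
          ring
        exact_mod_cast by
          calc ((m x : ℤ)) + (ℓ x : ℤ) * ((i x : ℤ) - 1) + 1
              = ((m x + ℓ x * (i x - 1) + 1 : ℕ) : ℤ) := by push_cast [h5]; ring
            _ ≤ (i₀ : ℤ) := by exact_mod_cast h3
      linarith
  · obtain ⟨x₀, _, hx₀⟩ := Finset.exists_mem_eq_sup Finset.univ Finset.univ_nonempty
      (fun x : A => m x + ℓ x * i x)
    have h1 : i₀ ≤ m x₀ + ℓ x₀ * i x₀ := by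
      rw [hNdef, hx₀] at hi₀leN
      exact hi₀leN
    have h2 : (i₀ : ℤ) ≤ (m x₀ : ℤ) + (ℓ x₀ : ℤ) * (i x₀ : ℤ) := by exact_mod_cast h1
    exact h2.trans (Finset.le_sup' (fun x : A => (m x : ℤ) + (ℓ x : ℤ) * (i x : ℤ)) (Finset.mem_univ x₀))


end AutHier
end
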